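/- arXiv:2006.15287 — 5 statements merged into one kernel-verified Lean document; each statement's English description precedes it below -/
import Mathlib

section
/- Let L, s and k be positive integers with L ≥ s+2 and 2s+2 ≤ k ≤ L+s. Then for every integer N ≥ κ'(s), the number of partitions of N lying in I_{L,s,k} is strictly greater than the number of partitions of N lying in D_{L,s}. -/
/-- `D_{L,s}`: nonempty partitions with all parts in `{s+1, ..., L+s}`. -/
def InD (L s : ℕ) {N : ℕ} (p : N.Partition) : Prop :=
  p.parts ≠ 0 ∧ ∀ x ∈ p.parts, s + 1 ≤ x ∧ x ≤ L + s

/-- `I_{L,s,k}`: partitions with smallest part `s`, all parts `≤ L+s`, and no part equal to `k`. -/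
def InI (L s k : ℕ) {N : ℕ} (p : N.Partition) : Prop :=
  s ∈ p.parts ∧ (∀ x ∈ p.parts, s ≤ x ∧ x ≤ L + s) ∧ k ∉ p.parts

/-- `F'(s) = (21s−2)(35s−3)+8s`. -/
def Fs' (s : ℕ) : ℕ := (21 * s - 2) * (35 * s - 3) + 8 * s

/-- `κ'(s) = (12s−1)((s+1)+(s+2)+⋯+(F'(s)−1))+1`. -/
def kappa' (s : ℕ) : ℕ := (12 * s - 1) * (∑ i ∈ Finset.Icc (s + 1) (Fs' s - 1), i) + 1

namespace Stmt4

open Multiset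

lemma Fs'_lb (s : ℕ) (hs : 0 < s) : 82*s*s + 28*s + 1 ≤ Fs' s := by
  obtain ⟨u, rfl⟩ : ∃ u, s = u + 1 := ⟨s - 1, by omega⟩
  unfold Fs'
  have h1 : 21*(u+1) - 2 = 21*u + 19 := by omega
  have h2 : 35*(u+1) - 3 = 35*u + 32 := by omega
  rw [h1, h2]; nlinarith

lemma kappa'_lb (s : ℕ) (hs : 0 < s) : 12*s + 3*s + 2 ≤ kappa' s := by
  have hF := Fs'_lb s hs
  have hmem : s + 1 ∈ Finset.Icc (s + 1) (Fs' s - 1) := by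
    simp only [Finset.mem_Icc]; constructor
    · exact le_rfl
    · have : 82*s*s + 28*s + 1 ≥ s + 2 := by nlinarith
      omega
  have hsum : s + 1 ≤ ∑ i ∈ Finset.Icc (s + 1) (Fs' s - 1), i :=
    Finset.single_le_sum (f := fun i => i) (fun i _ => Nat.zero_le i) hmem
  unfold kappa'
  have h12 : 11 * s ≤ 12 * s - 1 := by omega
  nlinarith

/-- pigeonhole -/
lemma pigeon (s : ℕ) (hs : 0 < s) (m : Multiset ℕ) (hlow : ∀ x ∈ m, s+1 ≤ x)
    (hbig : kappa' s ≤ m.sum) :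
    (∃ v, 12*s ≤ m.count v) ∨ (∃ x, Fs' s ≤ x ∧ x ∈ m) := by
  by_contra h
  push_neg at h
  obtain ⟨h1, h2⟩ := h
  have hsub : m.toFinset ⊆ Finset.Icc (s+1) (Fs' s - 1) := by
    intro x hx
    rw [Multiset.mem_toFinset] at hx
    rw [Finset.mem_Icc]
    refine ⟨hlow x hx, ?_⟩
    have := h2 x
    have hx' : ¬ (Fs' s ≤ x) := fun hc => (h2 x hc) hx
    omega
  have hrepr : m.sum = ∑ i ∈ Finset.Icc (s+1) (Fs' s - 1), m.count i • i :=
    Finset.sum_multiset_count_of_subset m _ hsub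
  have hle : m.sum ≤ ∑ i ∈ Finset.Icc (s+1) (Fs' s - 1), (12*s - 1) * i := by
    rw [hrepr]
    apply Finset.sum_le_sum
    intro i _
    have : m.count i ≤ 12*s - 1 := by have := h1 i; omega
    simpa [smul_eq_mul] using Nat.mul_le_mul_right i this
  rw [← Finset.mul_sum] at hle
  unfold kappa' at hbig
  omega

/-- representation into parts in [s+1, 2s+1] -/
lemma exists_rep (s : ℕ) (hs : 0 < s) : ∀ M : ℕ, s + 1 ≤ M →
    ∃ c : Multiset ℕ, (∀ x ∈ c, s + 1 ≤ x ∧ x ≤ 2*s+1) ∧ c.sum = M := by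
  intro M
  induction M using Nat.strong_induction_on with
  | _ M ih =>
    intro hM
    by_cases hM2 : M ≤ 2*s+1
    · exact ⟨{M}, by simpa using ⟨hM, hM2⟩, by simp⟩
    · obtain ⟨c, hc1, hc2⟩ := ih (M - (s+1)) (by omega) (by omega)
      refine ⟨(s+1) ::ₘ c, ?_, ?_⟩
      · intro x hx
        rcases Multiset.mem_cons.mp hx with rfl | hx
        · omega
        · exact hc1 x hx
      · rw [Multiset.sum_cons, hc2]; omega


/-! ### tau machinery -/

def tauT (s k j : ℕ) : ℕ := (j*k - s - 1)/s
def tau (s k j : ℕ) : ℕ := if Odd (tauT s k j) then tauT s k j else tauT s k j - 1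
def dC (s k j : ℕ) : ℕ := j*k - s * tau s k j
def CC (s k j : ℕ) : Multiset ℕ :=
  if dC s k j ≤ 2*s+1 then {dC s k j} else {s+1, dC s k j - s - 1}

lemma tau_spec (s k j : ℕ) (hs : 0 < s) (hk : 2*s+2 ≤ k) (hj : 1 ≤ j) :
    Odd (tau s k j) ∧ 1 ≤ tau s k j ∧ s * tau s k j + dC s k j = j*k
      ∧ s+1 ≤ dC s k j ∧ dC s k j ≤ 3*s := by
  have hjk : 2*s+2 ≤ j*k := le_trans hk (Nat.le_mul_of_pos_left k hj)
  set A := j*k - s - 1 with hA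
  have hA1 : s + 1 ≤ A := by omega
  have hdm := Nat.div_add_mod A s
  have hmlt := Nat.mod_lt A hs
  set T := A / s with hT
  have hT1 : 1 ≤ T := by
    rw [hT, Nat.le_div_iff_mul_le hs]; omega
  have hTT : tauT s k j = T := rfl
  have h1 : s * T ≤ A := by omega
  have h2 : A < s * T + s := by omega
  unfold dC tau
  rw [hTT]
  by_cases hodd : Odd T
  · rw [if_pos hodd]
    refine ⟨hodd, by omega, by omega, by omega, by omega⟩
  · rw [if_neg hodd]
    rw [Nat.not_odd_iff_even] at hodd
    have hT2 : 2 ≤ T := by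
      rcases hodd with ⟨c, hc⟩; omega
    have hmul : s * (T - 1) = s * T - s := by
      rw [Nat.mul_sub]; omega
    have hodd' : Odd (T - 1) := Nat.Even.sub_odd hT1 hodd odd_one
    refine ⟨hodd', by omega, by omega, by omega, by omega⟩

lemma tau_mono (s k : ℕ) (hs : 0 < s) (hk : 2*s+2 ≤ k) {j1 j2 : ℕ}
    (hj1 : 1 ≤ j1) (hlt : j1 < j2) : tau s k j1 < tau s k j2 := by
  have hstep : tauT s k j1 + 2 ≤ tauT s k j2 := by
    unfold tauT
    have hle : j1*k - s - 1 + 2*s ≤ j2*k - s - 1 := by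
      have h3 : j1 * k + k ≤ j2 * k := by
        have h4 := Nat.succ_le_of_lt hlt
        calc j1*k + k = (j1+1)*k := by ring
        _ ≤ j2 * k := Nat.mul_le_mul_right k h4
      have hjk : 2*s+2 ≤ j1*k := le_trans hk (Nat.le_mul_of_pos_left k hj1)
      omega
    calc (j1*k - s - 1)/s + 2 = ((j1*k - s - 1) + 2*s)/s := by
          rw [Nat.add_mul_div_right _ _ hs]
      _ ≤ (j2*k - s - 1)/s := Nat.div_le_div_right hle
  unfold tau
  split_ifs with h1 h2 h2 <;> omega

lemma CC_spec (s k j : ℕ) (hs : 0 < s) (hk : 2*s+2 ≤ k) (hj : 1 ≤ j) :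
    (∀ x ∈ CC s k j, s+1 ≤ x ∧ x ≤ 2*s+1) ∧ (CC s k j).sum = dC s k j := by
  obtain ⟨-, -, -, hd1, hd2⟩ := tau_spec s k j hs hk hj
  unfold CC
  split_ifs with h
  · exact ⟨by intro x hx; simp at hx; omega, by simp⟩
  · constructor
    · intro x hx
      simp only [insert_eq_cons, mem_cons, mem_singleton] at hx
      rcases hx with rfl | rfl <;> omega
    · show s + 1 + ((dC s k j - s - 1) + 0) = dC s k j
      omega

/-! ### B machinery -/

def yv (s P : ℕ) : ℕ := s + 1 + (P - (s+1)) % s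
def t0 (s P : ℕ) : ℕ := (P - (s+1)) / s - 13 * yv s P
def kap (s P : ℕ) : ℕ := if Even (t0 s P + 13*(2*s+1)) then 0 else 1
def tB (s P : ℕ) : ℕ := t0 s P - 13*(1 + kap s P)*(2*s+1)

lemma yv_spec (s P : ℕ) (hs : 0 < s) (hP : s + 1 ≤ P) :
    s + 1 ≤ yv s P ∧ yv s P ≤ 2*s := by
  unfold yv
  have := Nat.mod_lt (P - (s+1)) hs
  omega

lemma B_spec (s P : ℕ) (hs : 0 < s) (hP : 82*s*s + 28*s + 1 ≤ P) :
    P = (13*s+1) * yv s P + 13*s*(1 + kap s P)*(2*s+1) + s * tB s P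
    ∧ 4*s + 1 ≤ tB s P ∧ Even (tB s P) := by
  have hP1 : s + 1 ≤ P := by nlinarith
  obtain ⟨hy1, hy2⟩ := yv_spec s P hs hP1
  set y := yv s P with hy
  set Q := P - (s+1) with hQ
  have hQval : P = Q + s + 1 := by omega
  have hdm := Nat.div_add_mod Q s
  have hyQ : y = s + 1 + Q % s := rfl
  have hQbig : 82*s + 27 ≤ Q / s := by
    rw [Nat.le_div_iff_mul_le hs]
    nlinarith
  have ht0 : t0 s P = Q / s - 13 * y := rfl
  have ht0big : 56*s + 27 ≤ t0 s P := by
    rw [ht0]; omega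
  -- key identity : P = (13s+1) y + s * t0
  have hkey : P = (13*s+1) * y + s * t0 s P := by
    rw [ht0]
    have h13 : 13 * y ≤ Q / s := by omega
    have hsub : s * (Q/s - 13 * y) = s * (Q/s) - s * (13 * y) := Nat.mul_sub s _ _
    have hsle : s * (13 * y) ≤ s * (Q / s) := Nat.mul_le_mul_left s h13
    have hexp : (13*s+1) * y = s * (13 * y) + y := by ring
    rw [hsub, hexp]
    omega
  set κ := kap s P with hκ
  have hκ01 : κ = 0 ∨ κ = 1 := by
    unfold kap at hκ; split_ifs at hκ <;> omega
  have htBval : tB s P = t0 s P - 13*(1+κ)*(2*s+1) := rfl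
  rcases hκ01 with h0 | h1
  · -- κ = 0
    have hD : 13*(1+κ)*(2*s+1) = 26*s + 13 := by rw [h0]; ring
    have hle13 : 13*(1+κ)*(2*s+1) ≤ t0 s P := by omega
    have htBbig : 4*s+1 ≤ tB s P := by rw [htBval]; omega
    have hE : Even (t0 s P + 13*(2*s+1)) := by
      by_contra hc
      unfold kap at hκ
      rw [if_neg hc] at hκ
      omega
    have hE' : (t0 s P + 26*s + 13) % 2 = 0 := by
      rw [Nat.even_iff] at hE
      have : t0 s P + 13*(2*s+1) = t0 s P + 26*s + 13 := by ring
      omega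
    refine ⟨?_, htBbig, ?_⟩
    · have hmulsub : s * tB s P = s * t0 s P - s * (13*(1+κ)*(2*s+1)) := by
        rw [htBval, Nat.mul_sub]
      have hre : s * (13*(1+κ)*(2*s+1)) = 13*s*(1+κ)*(2*s+1) := by ring
      have hsle : s * (13*(1+κ)*(2*s+1)) ≤ s * t0 s P := Nat.mul_le_mul_left s hle13
      omega
    · rw [Nat.even_iff, htBval, hD]
      omega
  · -- κ = 1
    have hD : 13*(1+κ)*(2*s+1) = 52*s + 26 := by rw [h1]; ring
    have hle13 : 13*(1+κ)*(2*s+1) ≤ t0 s P := by omega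
    have htBbig : 4*s+1 ≤ tB s P := by rw [htBval]; omega
    have hE : ¬ Even (t0 s P + 13*(2*s+1)) := by
      by_contra hc
      unfold kap at hκ
      rw [if_pos hc] at hκ
      omega
    have hE' : (t0 s P + 26*s + 13) % 2 = 1 := by
      rw [Nat.even_iff] at hE
      have : t0 s P + 13*(2*s+1) = t0 s P + 26*s + 13 := by ring
      omega
    refine ⟨?_, htBbig, ?_⟩
    · have hmulsub : s * tB s P = s * t0 s P - s * (13*(1+κ)*(2*s+1)) := by
        rw [htBval, Nat.mul_sub]
      have hre : s * (13*(1+κ)*(2*s+1)) = 13*s*(1+κ)*(2*s+1) := by ring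
      have hsle : s * (13*(1+κ)*(2*s+1)) ≤ s * t0 s P := Nat.mul_le_mul_left s hle13
      omega
    · rw [Nat.even_iff, htBval, hD]
      omega


/-! ### images and theta -/

def tImage (s k : ℕ) (m : Multiset ℕ) : Multiset ℕ :=
  m.filter (· ≠ k) + CC s k (m.count k) + replicate (tau s k (m.count k)) s

def hImage (s : ℕ) (m : Multiset ℕ) (v : ℕ) : Multiset ℕ :=
  (m - replicate (2*s) v) + replicate (2*v) s

def bImage (s : ℕ) (m : Multiset ℕ) (P : ℕ) : Multiset ℕ :=
  (m.erase P + replicate (13*s+1) (yv s P)) +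
    (replicate (13*s*(1 + kap s P)) (2*s+1) + replicate (tB s P) s)

noncomputable def vmin (s : ℕ) (m : Multiset ℕ) : ℕ := sInf {v | 12*s ≤ m.count v}
noncomputable def pmax (s : ℕ) (m : Multiset ℕ) : ℕ := sInf {x | Fs' s ≤ x ∧ x ∈ m}

open Classical in
noncomputable def theta (s k : ℕ) (m : Multiset ℕ) : Multiset ℕ :=
  if 1 ≤ m.count k then tImage s k m
  else if ∃ v, 12*s ≤ m.count v then hImage s m (vmin s m)
  else bImage s m (pmax s m)

lemma count_s_zero {s : ℕ} {m : Multiset ℕ} (hlow : ∀ x ∈ m, s+1 ≤ x) :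
    m.count s = 0 := by
  rw [Multiset.count_eq_zero]
  intro hmem
  have := hlow s hmem; omega

/-! ### count lemmas -/

section Counts
variable {s k : ℕ} {m : Multiset ℕ}

lemma tImage_count_s (hs : 0 < s) (hk : 2*s+2 ≤ k) (hj : 1 ≤ m.count k)
    (hlow : ∀ x ∈ m, s+1 ≤ x) :
    (tImage s k m).count s = tau s k (m.count k) := by
  obtain ⟨hCb, -⟩ := CC_spec s k (m.count k) hs hk hj
  unfold tImage
  rw [Multiset.count_add, Multiset.count_add, Multiset.count_replicate, if_pos rfl]
  have h1 : (m.filter (· ≠ k)).count s = 0 := by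
    rw [Multiset.count_eq_zero]
    intro hmem
    have := hlow s (Multiset.mem_of_mem_filter hmem); omega
  have h2 : (CC s k (m.count k)).count s = 0 := by
    rw [Multiset.count_eq_zero]
    intro hmem
    have := hCb s hmem; omega
  omega

lemma tImage_count_ne (x : ℕ) (hx : x ≠ s) :
    (tImage s k m).count x
      = (m.filter (· ≠ k)).count x + (CC s k (m.count k)).count x := by
  unfold tImage
  rw [Multiset.count_add, Multiset.count_add, Multiset.count_replicate,
    if_neg (show ¬ s = x from fun h => hx h.symm)]
  omega

lemma hImage_count_s (hlow : ∀ x ∈ m, s+1 ≤ x) {v : ℕ} (hv : s + 1 ≤ v) :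
    (hImage s m v).count s = 2*v := by
  unfold hImage
  rw [Multiset.count_add, Multiset.count_sub, Multiset.count_replicate,
    Multiset.count_replicate, if_pos rfl, count_s_zero hlow,
    if_neg (show ¬ v = s by omega)]
  omega

lemma hImage_count_ne (v x : ℕ) (hx : x ≠ s) :
    (hImage s m v).count x = m.count x - (if v = x then 2*s else 0) := by
  unfold hImage
  rw [Multiset.count_add, Multiset.count_sub, Multiset.count_replicate,
    Multiset.count_replicate, if_neg (show ¬ s = x from fun h => hx h.symm)]
  omega

end Counts

section Counts2
variable {s k : ℕ} {m : Multiset ℕ} {P : ℕ}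

lemma bImage_count_s (hs : 0 < s) (hlow : ∀ x ∈ m, s+1 ≤ x) (hPbig : 2*s+2 ≤ P)
    (hy1 : s+1 ≤ yv s P) (hy2 : yv s P ≤ 2*s) :
    (bImage s m P).count s = tB s P := by
  unfold bImage
  rw [Multiset.count_add, Multiset.count_add, Multiset.count_add,
    Multiset.count_replicate, Multiset.count_replicate, Multiset.count_replicate,
    if_pos rfl, if_neg (show ¬ yv s P = s by omega), if_neg (show ¬ 2*s+1 = s by omega)]
  have h0 : (m.erase P).count s = 0 := by
    have h1 : (m.erase P).count s ≤ m.count s := Multiset.count_le_of_le s (Multiset.erase_le P m)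
    rw [count_s_zero hlow] at h1
    omega
  omega

lemma bImage_count_y (hs : 0 < s) (hPbig : 2*s+2 ≤ P)
    (hy1 : s+1 ≤ yv s P) (hy2 : yv s P ≤ 2*s) :
    (bImage s m P).count (yv s P) = m.count (yv s P) + (13*s+1) := by
  unfold bImage
  rw [Multiset.count_add, Multiset.count_add, Multiset.count_add,
    Multiset.count_replicate, Multiset.count_replicate, Multiset.count_replicate,
    if_pos rfl, if_neg (show ¬ 2*s+1 = yv s P by omega),
    if_neg (show ¬ s = yv s P by omega),
    Multiset.count_erase_of_ne (show yv s P ≠ P by omega)]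
  omega

lemma bImage_count_z (hs : 0 < s) (hPbig : 2*s+2 ≤ P)
    (hy1 : s+1 ≤ yv s P) (hy2 : yv s P ≤ 2*s) :
    (bImage s m P).count (2*s+1) = m.count (2*s+1) + 13*s*(1 + kap s P) := by
  unfold bImage
  rw [Multiset.count_add, Multiset.count_add, Multiset.count_add,
    Multiset.count_replicate, Multiset.count_replicate, Multiset.count_replicate,
    if_pos rfl, if_neg (show ¬ yv s P = 2*s+1 by omega),
    if_neg (show ¬ s = 2*s+1 by omega),
    Multiset.count_erase_of_ne (show 2*s+1 ≠ P by omega)]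
  omega

lemma bImage_count_P (hs : 0 < s) (hPbig : 2*s+2 ≤ P)
    (hy1 : s+1 ≤ yv s P) (hy2 : yv s P ≤ 2*s) :
    (bImage s m P).count P = m.count P - 1 := by
  unfold bImage
  rw [Multiset.count_add, Multiset.count_add, Multiset.count_add,
    Multiset.count_replicate, Multiset.count_replicate, Multiset.count_replicate,
    if_neg (show ¬ yv s P = P by omega), if_neg (show ¬ 2*s+1 = P by omega),
    if_neg (show ¬ s = P by omega), Multiset.count_erase_self]
  omega

lemma bImage_count_other (hs : 0 < s) {x : ℕ} (hxs : x ≠ s) (hxy : x ≠ yv s P)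
    (hxz : x ≠ 2*s+1) (hxP : x ≠ P) :
    (bImage s m P).count x = m.count x := by
  unfold bImage
  rw [Multiset.count_add, Multiset.count_add, Multiset.count_add,
    Multiset.count_replicate, Multiset.count_replicate, Multiset.count_replicate,
    if_neg (show ¬ yv s P = x from fun h => hxy h.symm),
    if_neg (show ¬ 2*s+1 = x from fun h => hxz h.symm),
    if_neg (show ¬ s = x from fun h => hxs h.symm),
    Multiset.count_erase_of_ne hxP]
  omega

/-! ### sum lemmas -/

lemma filter_k_split (k : ℕ) (m : Multiset ℕ) :
    m.filter (· ≠ k) + replicate (m.count k) k = m := by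
  have h1 := Multiset.filter_add_not (fun a => a ≠ k) m
  have h2 : m.filter (fun a => ¬ a ≠ k) = m.filter (· = k) := by
    apply Multiset.filter_congr
    intro x _
    constructor
    · intro h; exact not_not.mp h
    · intro h; exact fun hc => hc h
  rw [h2, Multiset.filter_eq'] at h1
  exact h1

lemma tImage_sum (hs : 0 < s) (hk : 2*s+2 ≤ k) (hj : 1 ≤ m.count k) :
    (tImage s k m).sum = m.sum := by
  obtain ⟨-, -, hsum, -, -⟩ := tau_spec s k (m.count k) hs hk hj
  obtain ⟨-, hCsum⟩ := CC_spec s k (m.count k) hs hk hj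
  have hsplit := filter_k_split k m
  have hmsum : (m.filter (· ≠ k)).sum + (m.count k) * k = m.sum := by
    conv_rhs => rw [← hsplit]
    rw [Multiset.sum_add, Multiset.sum_replicate, smul_eq_mul]
  unfold tImage
  rw [Multiset.sum_add, Multiset.sum_add, Multiset.sum_replicate, smul_eq_mul, hCsum]
  have hcomm : tau s k (m.count k) * s = s * tau s k (m.count k) := mul_comm _ _
  omega

lemma hImage_sum {v : ℕ} (h2s : 2*s ≤ m.count v) :
    (hImage s m v).sum = m.sum := by
  have hle : replicate (2*s) v ≤ m := Multiset.le_count_iff_replicate_le.mp h2s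
  have hsplit : m - replicate (2*s) v + replicate (2*s) v = m := tsub_add_cancel_of_le hle
  have hmsum : (m - replicate (2*s) v).sum + (2*s) * v = m.sum := by
    conv_rhs => rw [← hsplit]
    rw [Multiset.sum_add, Multiset.sum_replicate, smul_eq_mul]
  unfold hImage
  rw [Multiset.sum_add, Multiset.sum_replicate, smul_eq_mul]
  have hcomm : 2*s*v = 2*v*s := by ring
  omega

lemma bImage_sum (hs : 0 < s) (hPm : P ∈ m) (hP : 82*s*s + 28*s + 1 ≤ P) :
    (bImage s m P).sum = m.sum := by
  obtain ⟨hid, -, -⟩ := B_spec s P hs hP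
  have hmsum : P + (m.erase P).sum = m.sum := Multiset.sum_erase hPm
  unfold bImage
  rw [Multiset.sum_add, Multiset.sum_add, Multiset.sum_add,
    Multiset.sum_replicate, Multiset.sum_replicate, Multiset.sum_replicate,
    smul_eq_mul, smul_eq_mul, smul_eq_mul]
  have hcomm : tB s P * s = s * tB s P := mul_comm _ _
  omega

/-! ### membership lemmas -/

lemma mem_tImage {x : ℕ} (hx : x ∈ tImage s k m) :
    (x ∈ m ∧ x ≠ k) ∨ x ∈ CC s k (m.count k) ∨ x = s := by
  unfold tImage at hx
  rcases Multiset.mem_add.mp hx with hx | hx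
  · rcases Multiset.mem_add.mp hx with hx | hx
    · left
      rw [Multiset.mem_filter] at hx
      exact ⟨hx.1, hx.2⟩
    · right; left; exact hx
  · right; right; exact (Multiset.eq_of_mem_replicate hx)

lemma mem_hImage {v x : ℕ} (hx : x ∈ hImage s m v) : x ∈ m ∨ x = s := by
  unfold hImage at hx
  rcases Multiset.mem_add.mp hx with hx | hx
  · left; exact Multiset.mem_of_le (Multiset.sub_le_self m _) hx
  · right; exact Multiset.eq_of_mem_replicate hx

lemma mem_bImage {x : ℕ} (hx : x ∈ bImage s m P) :
    x ∈ m ∨ x = yv s P ∨ x = 2*s+1 ∨ x = s := by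
  unfold bImage at hx
  rcases Multiset.mem_add.mp hx with hx | hx
  · rcases Multiset.mem_add.mp hx with hx | hx
    · left; exact Multiset.mem_of_mem_erase hx
    · right; left; exact Multiset.eq_of_mem_replicate hx
  · rcases Multiset.mem_add.mp hx with hx | hx
    · right; right; left; exact Multiset.eq_of_mem_replicate hx
    · right; right; right; exact Multiset.eq_of_mem_replicate hx

end Counts2

/-! ### branch data -/

lemma kap01 (s P : ℕ) : kap s P = 0 ∨ kap s P = 1 := by
  unfold kap; split_ifs <;> simp

lemma vmin_spec {s : ℕ} {m : Multiset ℕ} (hh : ∃ v, 12*s ≤ m.count v) :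
    12*s ≤ m.count (vmin s m) ∧ ∀ u < vmin s m, m.count u < 12*s := by
  constructor
  · exact Nat.sInf_mem hh
  · intro u hu
    by_contra hc
    push_neg at hc
    have : vmin s m ≤ u := Nat.sInf_le (show u ∈ {v | 12*s ≤ m.count v} from hc)
    omega

lemma pmax_spec {s : ℕ} {m : Multiset ℕ} (hP : ∃ x, Fs' s ≤ x ∧ x ∈ m) :
    Fs' s ≤ pmax s m ∧ pmax s m ∈ m := Nat.sInf_mem hP

/-! ### cross impossibility -/

section Inj
variable {s k : ℕ} {m₁ m₂ : Multiset ℕ}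

lemma cross_TH (hs : 0 < s) (hk : 2*s+2 ≤ k) (hj₁ : 1 ≤ m₁.count k)
    (hlow₁ : ∀ x ∈ m₁, s+1 ≤ x) (hlow₂ : ∀ x ∈ m₂, s+1 ≤ x) {v : ℕ} (hv : s+1 ≤ v)
    (he : tImage s k m₁ = hImage s m₂ v) : False := by
  obtain ⟨hodd, -, -, -, -⟩ := tau_spec s k (m₁.count k) hs hk hj₁
  have h1 := tImage_count_s hs hk hj₁ hlow₁
  have h2 := hImage_count_s hlow₂ hv
  rw [he, h2] at h1
  rcases hodd with ⟨c, hc⟩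
  omega

lemma cross_TB (hs : 0 < s) (hk : 2*s+2 ≤ k) (hj₁ : 1 ≤ m₁.count k)
    (hlow₁ : ∀ x ∈ m₁, s+1 ≤ x) (hlow₂ : ∀ x ∈ m₂, s+1 ≤ x) {P : ℕ}
    (hP : 82*s*s + 28*s + 1 ≤ P)
    (he : tImage s k m₁ = bImage s m₂ P) : False := by
  obtain ⟨hodd, -, -, -, -⟩ := tau_spec s k (m₁.count k) hs hk hj₁
  have hP1 : s + 1 ≤ P := by nlinarith
  obtain ⟨hy1, hy2⟩ := yv_spec s P hs hP1
  obtain ⟨-, -, heven⟩ := B_spec s P hs hP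
  have hPbig : 2*s+2 ≤ P := by nlinarith
  have h1 := tImage_count_s hs hk hj₁ hlow₁
  have h2 := bImage_count_s (m := m₂) hs hlow₂ hPbig hy1 hy2
  rw [he, h2] at h1
  rcases hodd with ⟨c, hc⟩
  rcases heven with ⟨d, hd⟩
  omega

lemma cross_HB (hs : 0 < s) (hk : 2*s+2 ≤ k)
    (hlow₁ : ∀ x ∈ m₁, s+1 ≤ x) (hlow₂ : ∀ x ∈ m₂, s+1 ≤ x)
    {v : ℕ} (hv : s+1 ≤ v) (hvleast : ∀ u < v, m₁.count u < 12*s)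
    {P : ℕ} (hP : 82*s*s + 28*s + 1 ≤ P)
    (he : hImage s m₁ v = bImage s m₂ P) : False := by
  have hP1 : s + 1 ≤ P := by nlinarith
  obtain ⟨hy1, hy2⟩ := yv_spec s P hs hP1
  obtain ⟨-, htb, -⟩ := B_spec s P hs hP
  have hPbig : 2*s+2 ≤ P := by nlinarith
  have h1 := hImage_count_s hlow₁ hv
  have h2 := bImage_count_s (m := m₂) hs hlow₂ hPbig hy1 hy2
  rw [he, h2] at h1
  -- 2 v = tB ≥ 4s+1, so v > 2s ≥ y
  have hvbig : 2*s+1 ≤ v := by omega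
  have h3 := bImage_count_y (m := m₂) hs hPbig hy1 hy2
  have h4 : (hImage s m₁ v).count (yv s P)
      = m₁.count (yv s P) - (if v = yv s P then 2*s else 0) :=
    hImage_count_ne v _ (by omega)
  rw [he, h3] at h4
  rw [if_neg (show ¬ v = yv s P by omega)] at h4
  have h5 := hvleast (yv s P) (by omega)
  omega

/-! ### diagonal lemmas -/

lemma diag_TT (hs : 0 < s) (hk : 2*s+2 ≤ k) (hj₁ : 1 ≤ m₁.count k) (hj₂ : 1 ≤ m₂.count k)
    (hlow₁ : ∀ x ∈ m₁, s+1 ≤ x) (hlow₂ : ∀ x ∈ m₂, s+1 ≤ x)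
    (he : tImage s k m₁ = tImage s k m₂) : m₁ = m₂ := by
  have h1 := tImage_count_s hs hk hj₁ hlow₁
  have h2 := tImage_count_s hs hk hj₂ hlow₂
  rw [he, h2] at h1
  have hj : m₁.count k = m₂.count k := by
    by_contra hc
    rcases Nat.lt_or_ge (m₁.count k) (m₂.count k) with h | h
    · exact absurd h1.symm (Nat.ne_of_lt (tau_mono s k hs hk hj₁ h))
    · have h' : m₂.count k < m₁.count k := by omega
      exact absurd h1 (Nat.ne_of_lt (tau_mono s k hs hk hj₂ h'))
  unfold tImage at he
  rw [hj] at he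
  have hf : m₁.filter (· ≠ k) = m₂.filter (· ≠ k) := by
    have := add_right_cancel he
    exact add_right_cancel this
  have hs₁ := filter_k_split k m₁
  have hs₂ := filter_k_split k m₂
  rw [← hs₁, ← hs₂, hf, hj]

lemma diag_HH (hlow₁ : ∀ x ∈ m₁, s+1 ≤ x) (hlow₂ : ∀ x ∈ m₂, s+1 ≤ x)
    {v₁ v₂ : ℕ} (hv₁ : s+1 ≤ v₁) (hv₂ : s+1 ≤ v₂)
    (h2s₁ : 2*s ≤ m₁.count v₁) (h2s₂ : 2*s ≤ m₂.count v₂)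
    (he : hImage s m₁ v₁ = hImage s m₂ v₂) : m₁ = m₂ := by
  have h1 := hImage_count_s hlow₁ hv₁
  have h2 := hImage_count_s hlow₂ hv₂
  rw [he, h2] at h1
  have hv : v₁ = v₂ := by omega
  unfold hImage at he
  rw [hv] at he
  have hf : m₁ - replicate (2*s) v₂ = m₂ - replicate (2*s) v₂ := add_right_cancel he
  have hr₁ : m₁ - replicate (2*s) v₂ + replicate (2*s) v₂ = m₁ :=
    tsub_add_cancel_of_le (Multiset.le_count_iff_replicate_le.mp (hv ▸ h2s₁))
  have hr₂ : m₂ - replicate (2*s) v₂ + replicate (2*s) v₂ = m₂ :=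
    tsub_add_cancel_of_le (Multiset.le_count_iff_replicate_le.mp h2s₂)
  rw [← hr₁, ← hr₂, hf]

lemma diag_BB (hs : 0 < s)
    (hlow₁ : ∀ x ∈ m₁, s+1 ≤ x) (hlow₂ : ∀ x ∈ m₂, s+1 ≤ x)
    {P₁ P₂ : ℕ} (hP₁ : 82*s*s + 28*s + 1 ≤ P₁) (hP₂ : 82*s*s + 28*s + 1 ≤ P₂)
    (hm₁ : P₁ ∈ m₁) (hm₂ : P₂ ∈ m₂)
    (hnh₁ : ∀ u, m₁.count u < 12*s) (hnh₂ : ∀ u, m₂.count u < 12*s)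
    (he : bImage s m₁ P₁ = bImage s m₂ P₂) : m₁ = m₂ := by
  have hq₁ : s + 1 ≤ P₁ := by nlinarith
  have hq₂ : s + 1 ≤ P₂ := by nlinarith
  obtain ⟨hy11, hy12⟩ := yv_spec s P₁ hs hq₁
  obtain ⟨hy21, hy22⟩ := yv_spec s P₂ hs hq₂
  obtain ⟨hid₁, htb₁, -⟩ := B_spec s P₁ hs hP₁
  obtain ⟨hid₂, htb₂, -⟩ := B_spec s P₂ hs hP₂
  have hPb₁ : 2*s+2 ≤ P₁ := by nlinarith
  have hPb₂ : 2*s+2 ≤ P₂ := by nlinarith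
  -- step 1 : y equal
  have hy : yv s P₁ = yv s P₂ := by
    by_contra hc
    have h3 := bImage_count_y (m := m₁) hs hPb₁ hy11 hy12
    have h4 : (bImage s m₂ P₂).count (yv s P₁) = m₂.count (yv s P₁) :=
      bImage_count_other hs (by omega) hc (by omega) (by omega)
    rw [he, h4] at h3
    have := hnh₂ (yv s P₁)
    omega
  -- step 2 : kappa and z-count equal
  have hz₁ := bImage_count_z (m := m₁) hs hPb₁ hy11 hy12
  have hz₂ := bImage_count_z (m := m₂) hs hPb₂ hy21 hy22
  rw [he, hz₂] at hz₁
  have hk₁ := kap01 s P₁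
  have hk₂ := kap01 s P₂
  have hzc₁ := hnh₁ (2*s+1)
  have hzc₂ := hnh₂ (2*s+1)
  have hkap : kap s P₁ = kap s P₂ ∧ m₁.count (2*s+1) = m₂.count (2*s+1) := by
    rcases hk₁ with h | h <;> rcases hk₂ with h' | h' <;> rw [h, h'] at hz₁ <;>
      constructor <;> omega
  -- step 3 : tB equal hence P equal
  have hts₁ := bImage_count_s (m := m₁) hs hlow₁ hPb₁ hy11 hy12
  have hts₂ := bImage_count_s (m := m₂) hs hlow₂ hPb₂ hy21 hy22
  rw [he, hts₂] at hts₁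
  have hP : P₁ = P₂ := by
    rw [hid₁, hid₂, hy, hkap.1, hts₁]
  subst hP
  -- step 4 : all counts equal
  ext x
  by_cases hxs : x = s
  · rw [hxs, count_s_zero hlow₁, count_s_zero hlow₂]
  by_cases hxy : x = yv s P₁
  · have c₁ := bImage_count_y (m := m₁) hs hPb₁ hy11 hy12
    have c₂ := bImage_count_y (m := m₂) hs hPb₂ hy21 hy22
    rw [he, c₂] at c₁
    rw [hxy]; omega
  by_cases hxz : x = 2*s+1
  · rw [hxz]; exact hkap.2
  by_cases hxP : x = P₁
  · have c₁ := bImage_count_P (m := m₁) hs hPb₁ hy11 hy12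
    have c₂ := bImage_count_P (m := m₂) hs hPb₂ hy21 hy22
    rw [he, c₂] at c₁
    have d₁ : 1 ≤ m₁.count P₁ := Multiset.one_le_count_iff_mem.mpr hm₁
    have d₂ : 1 ≤ m₂.count P₁ := Multiset.one_le_count_iff_mem.mpr hm₂
    rw [hxP]; omega
  · have c₁ := bImage_count_other (m := m₁) (P := P₁) hs hxs hxy hxz hxP
    have c₂ := bImage_count_other (m := m₂) (P := P₁) hs hxs hxy hxz hxP
    rw [← c₁, ← c₂, he]

end Inj

/-! ### master case lemma -/

lemma theta_master (s k N : ℕ) (hs : 0 < s) (hk : 2*s+2 ≤ k) (hN : kappa' s ≤ N)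
    {m : Multiset ℕ} (hlow : ∀ x ∈ m, s+1 ≤ x) (hsum : m.sum = N) :
    (1 ≤ m.count k ∧ theta s k m = tImage s k m)
    ∨ (m.count k = 0 ∧ (12*s ≤ m.count (vmin s m)) ∧ s+1 ≤ vmin s m
        ∧ (∀ u < vmin s m, m.count u < 12*s) ∧ theta s k m = hImage s m (vmin s m))
    ∨ (m.count k = 0 ∧ (∀ u, m.count u < 12*s) ∧ pmax s m ∈ m ∧ Fs' s ≤ pmax s m
        ∧ theta s k m = bImage s m (pmax s m)) := by
  by_cases hT : 1 ≤ m.count k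
  · left; exact ⟨hT, by unfold theta; rw [if_pos hT]⟩
  · have hT0 : m.count k = 0 := by omega
    by_cases hH : ∃ v, 12*s ≤ m.count v
    · right; left
      obtain ⟨h1, h2⟩ := vmin_spec hH
      have hmem : vmin s m ∈ m := by
        rw [← Multiset.count_pos]; omega
      exact ⟨hT0, h1, hlow _ hmem, h2, by unfold theta; rw [if_neg hT, if_pos hH]⟩
    · right; right
      have hpig := pigeon s hs m hlow (by omega)
      rcases hpig with h | h
      · exact absurd h hH
      · obtain ⟨h1, h2⟩ := pmax_spec h
        refine ⟨hT0, ?_, h2, h1, by unfold theta; rw [if_neg hT, if_neg hH]⟩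
        push_neg at hH
        intro u; have := hH u; omega

/-! ### theta is injective -/

lemma theta_inj (s k N : ℕ) (hs : 0 < s) (hk : 2*s+2 ≤ k) (hN : kappa' s ≤ N)
    {m₁ m₂ : Multiset ℕ}
    (hlow₁ : ∀ x ∈ m₁, s+1 ≤ x) (hsum₁ : m₁.sum = N)
    (hlow₂ : ∀ x ∈ m₂, s+1 ≤ x) (hsum₂ : m₂.sum = N)
    (he : theta s k m₁ = theta s k m₂) : m₁ = m₂ := by
  have hM₁ := theta_master s k N hs hk hN hlow₁ hsum₁
  have hM₂ := theta_master s k N hs hk hN hlow₂ hsum₂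
  have hF : (0:ℕ) < s := hs
  rcases hM₁ with ⟨hj₁, e₁⟩ | ⟨hk₁, hv₁, hvm₁, hvl₁, e₁⟩ | ⟨hk₁, hnh₁, hpm₁, hpf₁, e₁⟩ <;>
    rcases hM₂ with ⟨hj₂, e₂⟩ | ⟨hk₂, hv₂, hvm₂, hvl₂, e₂⟩ | ⟨hk₂, hnh₂, hpm₂, hpf₂, e₂⟩ <;>
    rw [e₁, e₂] at he
  · exact diag_TT hs hk hj₁ hj₂ hlow₁ hlow₂ he
  · exact absurd he (fun h => cross_TH hs hk hj₁ hlow₁ hlow₂ hvm₂ h)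
  · have hb : 82*s*s + 28*s + 1 ≤ pmax s m₂ := le_trans (Fs'_lb s hs) hpf₂
    exact absurd he (fun h => cross_TB hs hk hj₁ hlow₁ hlow₂ hb h)
  · exact absurd he.symm (fun h => cross_TH hs hk hj₂ hlow₂ hlow₁ hvm₁ h)
  · exact diag_HH hlow₁ hlow₂ hvm₁ hvm₂ (by omega) (by omega) he
  · have hb : 82*s*s + 28*s + 1 ≤ pmax s m₂ := le_trans (Fs'_lb s hs) hpf₂
    exact absurd he (fun h => cross_HB hs hk hlow₁ hlow₂ hvm₁ hvl₁ hb h)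
  · have hb : 82*s*s + 28*s + 1 ≤ pmax s m₁ := le_trans (Fs'_lb s hs) hpf₁
    exact absurd he.symm (fun h => cross_TB hs hk hj₂ hlow₂ hlow₁ hb h)
  · have hb : 82*s*s + 28*s + 1 ≤ pmax s m₁ := le_trans (Fs'_lb s hs) hpf₁
    exact absurd he.symm (fun h => cross_HB hs hk hlow₂ hlow₁ hvm₂ hvl₂ hb h)
  · have hb₁ : 82*s*s + 28*s + 1 ≤ pmax s m₁ := le_trans (Fs'_lb s hs) hpf₁
    have hb₂ : 82*s*s + 28*s + 1 ≤ pmax s m₂ := le_trans (Fs'_lb s hs) hpf₂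
    exact diag_BB hs hlow₁ hlow₂ hb₁ hb₂ hpm₁ hpm₂ hnh₁ hnh₂ he

/-! ### theta image properties -/

lemma theta_props (s k L N : ℕ) (hs : 0 < s) (hL : s+2 ≤ L) (hk : 2*s+2 ≤ k)
    (hN : kappa' s ≤ N) {m : Multiset ℕ}
    (hlow : ∀ x ∈ m, s+1 ≤ x ∧ x ≤ L+s) (hsum : m.sum = N) :
    (theta s k m).sum = N ∧ s ∈ theta s k m
      ∧ (∀ x ∈ theta s k m, s ≤ x ∧ x ≤ L+s) ∧ k ∉ theta s k m
      ∧ (theta s k m).count s ≠ 2 := by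
  have hlow' : ∀ x ∈ m, s+1 ≤ x := fun x hx => (hlow x hx).1
  have hM := theta_master s k N hs hk hN hlow' hsum
  rcases hM with ⟨hj, e⟩ | ⟨hk0, hv, hvm, hvl, e⟩ | ⟨hk0, hnh, hpm, hpf, e⟩ <;> rw [e]
  · -- T branch
    obtain ⟨hodd, htau1, -, -, -⟩ := tau_spec s k (m.count k) hs hk hj
    obtain ⟨hCb, -⟩ := CC_spec s k (m.count k) hs hk hj
    have hcnt := tImage_count_s hs hk hj hlow'
    refine ⟨by rw [tImage_sum hs hk hj, hsum], ?_, ?_, ?_, ?_⟩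
    · rw [← Multiset.count_pos, hcnt]; omega
    · intro x hx
      rcases mem_tImage hx with ⟨hxm, -⟩ | hC | rfl
      · have := hlow x hxm; omega
      · have := hCb x hC; omega
      · omega
    · intro hmem
      rcases mem_tImage hmem with ⟨-, hne⟩ | hC | hC
      · exact hne rfl
      · have := hCb k hC; omega
      · omega
    · rw [hcnt]
      rcases hodd with ⟨c, hc⟩; omega
  · -- H branch
    have hcnt := hImage_count_s hlow' hvm
    refine ⟨by rw [hImage_sum (by omega), hsum], ?_, ?_, ?_, ?_⟩
    · rw [← Multiset.count_pos, hcnt]; omega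
    · intro x hx
      rcases mem_hImage hx with hxm | rfl
      · have := hlow x hxm; omega
      · omega
    · intro hmem
      rcases mem_hImage hmem with hxm | hC
      · rw [← Multiset.count_pos, hk0] at hxm; omega
      · omega
    · rw [hcnt]; omega
  · -- B branch
    have hb : 82*s*s + 28*s + 1 ≤ pmax s m := le_trans (Fs'_lb s hs) hpf
    have hq : s + 1 ≤ pmax s m := by nlinarith
    obtain ⟨hy1, hy2⟩ := yv_spec s (pmax s m) hs hq
    obtain ⟨-, htb, -⟩ := B_spec s (pmax s m) hs hb
    have hPb : 2*s+2 ≤ pmax s m := by nlinarith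
    have hcnt := bImage_count_s (m := m) hs hlow' hPb hy1 hy2
    refine ⟨by rw [bImage_sum hs hpm hb, hsum], ?_, ?_, ?_, ?_⟩
    · rw [← Multiset.count_pos, hcnt]; omega
    · intro x hx
      rcases mem_bImage hx with hxm | rfl | rfl | rfl
      · have := hlow x hxm; omega
      · omega
      · omega
      · omega
    · intro hmem
      rcases mem_bImage hmem with hxm | hC | hC | hC
      · rw [← Multiset.count_pos, hk0] at hxm; omega
      · omega
      · omega
      · omega
    · rw [hcnt]; omega

theorem stmt_4' (L s k : ℕ) (hs : 0 < s) (hL : s + 2 ≤ L)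
    (hk1 : 2 * s + 2 ≤ k) (hk2 : k ≤ L + s)
    (N : ℕ) (hN : kappa' s ≤ N) :
    Nat.card {p : N.Partition // InI L s k p} > Nat.card {p : N.Partition // InD L s p} := by
  classical
  have hprops : ∀ p : N.Partition, InD L s p →
      (theta s k p.parts).sum = N ∧ s ∈ theta s k p.parts
      ∧ (∀ x ∈ theta s k p.parts, s ≤ x ∧ x ≤ L+s) ∧ k ∉ theta s k p.parts
      ∧ (theta s k p.parts).count s ≠ 2 := by
    intro p hp
    exact theta_props s k L N hs hL hk1 hN (fun x hx => hp.2 x hx) p.parts_sum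
  let f : {p : N.Partition // InD L s p} → {p : N.Partition // InI L s k p} :=
    fun q => ⟨⟨theta s k q.1.parts,
      fun {i} hi => lt_of_lt_of_le hs ((hprops q.1 q.2).2.2.1 i hi).1,
      (hprops q.1 q.2).1⟩,
      ⟨(hprops q.1 q.2).2.1, (hprops q.1 q.2).2.2.1, (hprops q.1 q.2).2.2.2.1⟩⟩
  have hfparts : ∀ q, (f q).1.parts = theta s k q.1.parts := fun q => rfl
  have hinj : Function.Injective f := by
    intro q₁ q₂ hfe
    have he : theta s k q₁.1.parts = theta s k q₂.1.parts := by
      rw [← hfparts q₁, ← hfparts q₂, hfe]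
    have hpe := theta_inj s k N hs hk1 hN
      (fun x hx => (q₁.2.2 x hx).1) q₁.1.parts_sum
      (fun x hx => (q₂.2.2 x hx).1) q₂.1.parts_sum he
    apply Subtype.ext
    exact Nat.Partition.ext hpe
  -- the extra element w0
  have hNlb := kappa'_lb s hs
  obtain ⟨c, hc1, hc2⟩ := exists_rep s hs (N - 2*s) (by omega)
  have hc0 : c.count s = 0 := count_s_zero (fun x hx => (hc1 x hx).1)
  have hw0pos : ∀ {i : ℕ}, i ∈ c + Multiset.replicate 2 s → 0 < i := by
    intro i hi
    rcases Multiset.mem_add.mp hi with h | h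
    · have := hc1 i h; omega
    · have := Multiset.eq_of_mem_replicate h; omega
  have hw0sum : (c + Multiset.replicate 2 s).sum = N := by
    rw [Multiset.sum_add, Multiset.sum_replicate, hc2, smul_eq_mul]
    omega
  let w0 : N.Partition := ⟨c + Multiset.replicate 2 s, hw0pos, hw0sum⟩
  have hw0I : InI L s k w0 := by
    refine ⟨?_, ?_, ?_⟩
    · exact Multiset.mem_add.mpr (Or.inr (Multiset.mem_replicate.mpr ⟨by omega, rfl⟩))
    · intro x hx
      rcases Multiset.mem_add.mp hx with h | h
      · have := hc1 x h; omega
      · have := Multiset.eq_of_mem_replicate h; omega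
    · intro hmem
      rcases Multiset.mem_add.mp hmem with h | h
      · have := hc1 k h; omega
      · have := Multiset.eq_of_mem_replicate h; omega
  have hw0cnt : w0.parts.count s = 2 := by
    show (c + Multiset.replicate 2 s).count s = 2
    rw [Multiset.count_add, hc0, Multiset.count_replicate, if_pos rfl]
  have hnotmem : (⟨w0, hw0I⟩ : {p : N.Partition // InI L s k p}) ∉ Set.range f := by
    rintro ⟨q, hq⟩
    have h2 := (hprops q.1 q.2).2.2.2.2
    apply h2
    have : (f q).1.parts = w0.parts := by rw [hq]
    rw [hfparts q] at this
    rw [this, hw0cnt]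
  have hcard := Fintype.card_lt_of_injective_of_notMem f hinj hnotmem
  rw [← Nat.card_eq_fintype_card, ← Nat.card_eq_fintype_card] at hcard
  exact hcard

end Stmt4

theorem stmt_4 (L s k : ℕ) (hs : 0 < s) (hL : s + 2 ≤ L)
    (hk1 : 2 * s + 2 ≤ k) (hk2 : k ≤ L + s)
    (N : ℕ) (hN : kappa' s ≤ N) :
    Nat.card {p : N.Partition // InI L s k p} > Nat.card {p : N.Partition // InD L s p} :=
  Stmt4.stmt_4' L s k hs hL hk1 hk2 N hN
end

section
/- Let L, s and k be positive integers with L ≥ 3 and k ≥ s+1. Then every coefficient of the formal power series H_{L,s,k+s}(q) − H_{L,s,k}(q) is nonnegative. -/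
open PowerSeries in
/-- The formal power series
`H_{L,s,k}(q) = q^s(1−q^k)/∏_{j=0}^{L}(1−q^{s+j}) − (1/∏_{j=1}^{L}(1−q^{s+j}) − 1)`
over `ℤ`.  Each factor `1 − q^m` with `m ≥ 1` has constant coefficient `1`, so its
inverse is given by `PowerSeries.invOfUnit _ 1`. -/
noncomputable def Hser (L s k : ℕ) : PowerSeries ℤ :=
  (X : PowerSeries ℤ) ^ s * (1 - (X : PowerSeries ℤ) ^ k) *
      invOfUnit (∏ j ∈ Finset.range (L + 1), (1 - (X : PowerSeries ℤ) ^ (s + j))) 1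
    - (invOfUnit (∏ j ∈ Finset.range L, (1 - (X : PowerSeries ℤ) ^ (s + 1 + j))) 1 - 1)

open PowerSeries

/-- Geometric series `∑ X^{m n}`. -/
noncomputable def geo (m : ℕ) : PowerSeries ℤ :=
  PowerSeries.mk fun n => if m ∣ n then 1 else 0

lemma geo_nonneg (m : ℕ) : ∀ n, 0 ≤ coeff n (geo m) := by
  intro n
  simp only [geo, coeff_mk]
  split <;> norm_num

lemma one_sub_X_pow_mul_geo (m : ℕ) (hm : 0 < m) :
    (1 - (X : PowerSeries ℤ) ^ m) * geo m = 1 := by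
  ext n
  rw [sub_mul, one_mul, map_sub, coeff_X_pow_mul']
  rcases eq_or_ne n 0 with rfl | hn
  · simp [geo, hm.ne', coeff_mk]
  · rw [coeff_one, if_neg hn]
    by_cases hle : m ≤ n
    · simp only [geo, coeff_mk, if_pos hle]
      have : m ∣ n ↔ m ∣ n - m := by
        constructor
        · intro h; exact (Nat.dvd_sub h dvd_rfl)
        · intro h
          have := Nat.dvd_add h (dvd_refl m)
          rwa [Nat.sub_add_cancel hle] at this
      rcases em (m ∣ n) with h | h
      · rw [if_pos h, if_pos (this.mp h)]; ring
      · rw [if_neg h, if_neg (fun hh => h (this.mpr hh))]; ring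
    · simp only [geo, coeff_mk, if_neg hle]
      have h : ¬ m ∣ n := by
        intro h
        rcases h with ⟨c, rfl⟩
        rcases Nat.eq_zero_or_pos c with rfl | hc
        · simp at hn
        · exact hle (Nat.le_mul_of_pos_right m hc)
      rw [if_neg h]; ring

lemma eq_invOfUnit {f h : PowerSeries ℤ} (hf : constantCoeff f = 1)
    (hh : f * h = 1) : h = invOfUnit f 1 := by
  have h1 : f * invOfUnit f 1 = 1 := mul_invOfUnit f 1 (by simpa using hf)
  calc h = h * (f * invOfUnit f 1) := by rw [h1, mul_one]
    _ = (f * h) * invOfUnit f 1 := by ring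
    _ = invOfUnit f 1 := by rw [hh, one_mul]

lemma coeff_mul_nonneg {f g : PowerSeries ℤ} (hf : ∀ n, 0 ≤ coeff n f)
    (hg : ∀ n, 0 ≤ coeff n g) : ∀ n, 0 ≤ coeff n (f * g) := by
  intro n
  rw [coeff_mul]
  exact Finset.sum_nonneg fun p _ => mul_nonneg (hf _) (hg _)

lemma constCoeff_one_sub_X_pow (m : ℕ) (hm : 0 < m) :
    constantCoeff (1 - (X : PowerSeries ℤ) ^ m) = 1 := by
  simp [map_sub, map_pow, constantCoeff_X, zero_pow hm.ne']

lemma coeff_prod_nonneg {ι : Type*} (t : Finset ι) (f : ι → PowerSeries ℤ)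
    (h : ∀ i ∈ t, ∀ n, 0 ≤ coeff n (f i)) : ∀ n, 0 ≤ coeff n (∏ i ∈ t, f i) := by
  classical
  induction t using Finset.induction with
  | empty => intro n; rw [Finset.prod_empty, coeff_one]; split <;> norm_num
  | insert _ _ hx ih =>
    rw [Finset.prod_insert hx]
    exact coeff_mul_nonneg (h _ (Finset.mem_insert_self _ _))
      (ih fun i hi => h i (Finset.mem_insert_of_mem hi))

theorem stmt_9 (L s k : ℕ) (hs : 0 < s) (hL : 3 ≤ L) (hk : s + 1 ≤ k) :
    ∀ N : ℕ, 0 ≤ PowerSeries.coeff N (Hser L s (k + s) - Hser L s k) := by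
  intro N
  set A : PowerSeries ℤ := ∏ j ∈ Finset.range (L + 1), (1 - (X : PowerSeries ℤ) ^ (s + j))
    with hA
  set B : PowerSeries ℤ := ∏ j ∈ Finset.range L, (1 - (X : PowerSeries ℤ) ^ (s + 1 + j))
    with hB
  have hAB : A = (1 - (X : PowerSeries ℤ) ^ s) * B := by
    rw [hA, Finset.prod_range_succ']
    rw [hB, mul_comm]
    congr 1
    · apply Finset.prod_congr rfl
      intro j _
      congr 2
      omega
  have hccB : constantCoeff B = 1 := by
    rw [hB, map_prod]
    apply Finset.prod_eq_one
    intro j _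
    exact constCoeff_one_sub_X_pow _ (by omega)
  have hccA : constantCoeff A = 1 := by
    rw [hAB, map_mul, hccB, mul_one]
    exact constCoeff_one_sub_X_pow _ hs
  have hAinv : A * invOfUnit A 1 = 1 := mul_invOfUnit A 1 (by simpa using hccA)
  -- B's inverse is the product of geometric series
  have hBgeo : B * ∏ j ∈ Finset.range L, geo (s + 1 + j) = 1 := by
    rw [hB, ← Finset.prod_mul_distrib]
    apply Finset.prod_eq_one
    intro j _
    exact one_sub_X_pow_mul_geo _ (by omega)
  have hBinv : (∏ j ∈ Finset.range L, geo (s + 1 + j)) = invOfUnit B 1 :=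
    eq_invOfUnit hccB hBgeo
  -- (1 - X^s) * invA = invB
  have hkey : (1 - (X : PowerSeries ℤ) ^ s) * invOfUnit A 1 = invOfUnit B 1 := by
    apply eq_invOfUnit hccB
    calc B * ((1 - (X : PowerSeries ℤ) ^ s) * invOfUnit A 1)
        = ((1 - (X : PowerSeries ℤ) ^ s) * B) * invOfUnit A 1 := by ring
      _ = A * invOfUnit A 1 := by rw [← hAB]
      _ = 1 := hAinv
  -- the difference simplifies
  have hdiff : Hser L s (k + s) - Hser L s k =
      (X : PowerSeries ℤ) ^ (s + k) * invOfUnit B 1 := by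
    rw [← hkey]
    simp only [Hser, ← hA, ← hB]
    ring_nf
  rw [hdiff, ← hBinv]
  apply coeff_mul_nonneg
  · intro n
    rw [coeff_X_pow]
    split <;> norm_num
  · exact coeff_prod_nonneg _ _ (fun j _ => geo_nonneg _)
end

section
/- Let L, s, k and i be positive integers with L ≥ 3, k ≥ s+1 and s ≤ i ≤ L+s. Then every coefficient of the formal power series H_{L,s,k+i}(q) − H_{L,s,k}(q) is nonnegative. -/
open PowerSeries Finset

/-- geometric series for exponent m -/
noncomputable def Gg (m : ℕ) : PowerSeries ℤ := PowerSeries.mk fun n => if m ∣ n then 1 else 0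

lemma Gg_nonneg (m n : ℕ) : 0 ≤ coeff n (Gg m) := by
  simp only [Gg, coeff_mk]; split <;> norm_num

lemma Gg_mul (m : ℕ) (hm : 0 < m) : (1 - (X : PowerSeries ℤ)^m) * Gg m = 1 := by
  ext n
  rw [sub_mul, one_mul, map_sub, coeff_X_pow_mul']
  rcases Nat.eq_zero_or_pos n with rfl | hn
  · simp [Gg, hm.ne']
  · rw [coeff_one, if_neg hn.ne']
    simp only [Gg, coeff_mk]
    rcases le_or_gt m n with h | h
    · rw [if_pos h]
      have hiff : m ∣ n ↔ m ∣ n - m := ⟨fun d => Nat.dvd_sub d dvd_rfl, fun d => by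
        have h2 := Nat.dvd_add d (dvd_refl m); rwa [Nat.sub_add_cancel h] at h2⟩
      by_cases hd : m ∣ n
      · rw [if_pos hd, if_pos (hiff.mp hd), sub_self]
      · rw [if_neg hd, if_neg (mt hiff.mpr hd), sub_self]
    · rw [if_neg (not_le.2 h)]
      have hnd : ¬ m ∣ n := fun d => absurd (Nat.le_of_dvd hn d) (not_le.2 h)
      simp [hnd]

lemma const_prod (s : ℕ) (hs : 0 < s) (t : Finset ℕ) :
    constantCoeff (∏ j ∈ t, (1 - (X : PowerSeries ℤ) ^ (s + j))) = 1 := by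
  rw [map_prod]
  apply Finset.prod_eq_one
  intro j _
  simp [zero_pow (by omega : s + j ≠ 0)]

lemma inv_eq (f g : PowerSeries ℤ) (hf : constantCoeff f = 1) (hfg : f * g = 1) :
    invOfUnit f 1 = g := by
  have h1 : f * invOfUnit f 1 = 1 := mul_invOfUnit f 1 (by simp [hf])
  calc invOfUnit f 1 = invOfUnit f 1 * (f * g) := by rw [hfg, mul_one]
    _ = (f * invOfUnit f 1) * g := by ring
    _ = g := by rw [h1, one_mul]

lemma prod_Gg_nonneg (t : Finset ℕ) (f : ℕ → ℕ) (n : ℕ) :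
    0 ≤ coeff n (∏ j ∈ t, Gg (f j)) := by
  refine Finset.prod_induction _ (fun g => ∀ n, 0 ≤ coeff n g) ?_ ?_ ?_ n
  · intro a b ha hb n
    rw [coeff_mul]
    exact Finset.sum_nonneg fun p _ => mul_nonneg (ha _) (hb _)
  · intro n; rw [coeff_one]; split <;> norm_num
  · exact fun j _ n => Gg_nonneg _ _

theorem stmt_10 (L s k i : ℕ) (hs : 0 < s) (hL : 3 ≤ L) (hk : s + 1 ≤ k)
    (hi1 : s ≤ i) (hi2 : i ≤ L + s) :
    ∀ N : ℕ, 0 ≤ PowerSeries.coeff N (Hser L s (k + i) - Hser L s k) := by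
  intro N
  set Q := ∏ j ∈ range (L+1), Gg (s+j) with hQ
  have hinv : invOfUnit (∏ j ∈ range (L+1), (1 - (X:PowerSeries ℤ)^(s+j))) 1 = Q := by
    apply inv_eq _ _ (const_prod s hs _)
    rw [hQ, ← prod_mul_distrib]
    exact prod_eq_one fun j _ => Gg_mul _ (by omega)
  have hdiff : Hser L s (k+i) - Hser L s k
      = X^(s+k) * ((1 - (X:PowerSeries ℤ)^i) * Q) := by
    simp only [Hser, hinv]
    ring
  rw [hdiff]
  obtain ⟨j0, rfl⟩ : ∃ j0, i = s + j0 := ⟨i - s, by omega⟩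
  have hj0 : j0 ∈ range (L+1) := mem_range.2 (by omega)
  have h2 : (1 - (X:PowerSeries ℤ)^(s+j0)) * Q = ∏ j ∈ (range (L+1)).erase j0, Gg (s+j) := by
    rw [hQ, ← Finset.mul_prod_erase _ _ hj0, ← mul_assoc, Gg_mul _ (by omega), one_mul]
  rw [h2, coeff_X_pow_mul']
  split
  · exact prod_Gg_nonneg _ _ _
  · exact le_refl 0
end

section
/- Let L be an integer with L ≥ 11. Then for every integer N ≥ 4, the number of partitions of N lying in C*_{L,2} is at least the number of partitions of N lying in D_{L,2}; moreover, for every integer N ≥ 14 this inequality is strict. -/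
/-- `D_{L,2}`: nonempty partitions with all parts in `{3, ..., L+2}`. -/
def InD2 (L : ℕ) {N : ℕ} (p : N.Partition) : Prop :=
  p.parts ≠ 0 ∧ ∀ x ∈ p.parts, 3 ≤ x ∧ x ≤ L + 2

/-- `C*_{L,2}`: partitions with smallest part `2`, all parts `≤ L+2`, and no part equal to `L`. -/
def InCStar2 (L : ℕ) {N : ℕ} (p : N.Partition) : Prop :=
  2 ∈ p.parts ∧ (∀ x ∈ p.parts, 2 ≤ x ∧ x ≤ L + 2) ∧ L ∉ p.parts

open Multiset

/-- minimum element of a multiset of naturals -/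
def mmin (s : Multiset ℕ) : ℕ := (s.sort (· ≤ ·)).headI

lemma mmin_mem {s : Multiset ℕ} (h : s ≠ 0) : mmin s ∈ s := by
  have hl : s.sort (· ≤ ·) ≠ [] := by
    intro he
    apply h
    have := congrArg List.length he
    simpa [Multiset.length_sort, Multiset.card_eq_zero] using this
  obtain ⟨a, t, ht⟩ := List.exists_cons_of_ne_nil hl
  have : mmin s ∈ s.sort (· ≤ ·) := by rw [mmin, ht]; simp
  rwa [Multiset.mem_sort] at this

lemma mmin_le {s : Multiset ℕ} {x : ℕ} (hx : x ∈ s) : mmin s ≤ x := by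
  have hl : x ∈ s.sort (· ≤ ·) := by rwa [Multiset.mem_sort]
  have hs : (s.sort (· ≤ ·)).Pairwise (· ≤ ·) := Multiset.pairwise_sort _ _
  obtain ⟨a, t, ht⟩ := List.exists_cons_of_ne_nil (List.ne_nil_of_mem hl)
  rw [ht] at hl hs
  rw [mmin, ht]
  simp only [List.headI]
  rcases List.mem_cons.mp hl with rfl | hxt
  · exact le_refl _
  · exact (List.pairwise_cons.mp hs).1 x hxt

def pack (c d : ℕ) (t : Multiset ℕ) : Multiset ℕ :=
  Multiset.replicate c 2 + Multiset.replicate d 3 + t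

def Xc (m : ℕ) : ℕ :=
  if m = 4 then 2 else if m = 5 then 1 else if m = 6 then 1 else if m = 7 then 2
  else if m = 9 then 1 else if m % 2 = 0 then (m - 6) / 2 else (m - 9) / 2

def Xd (m : ℕ) : ℕ :=
  if m = 4 then 0 else if m = 5 then 1 else if m = 6 then 0 else if m = 7 then 1
  else if m = 9 then 1 else if m % 2 = 0 then 2 else 3

def Xmk (m : ℕ) : Multiset ℕ := if m = 6 then {4} else if m = 9 then {4} else 0

def Yc (w : ℕ) : ℕ :=
  if w = 4 then 1 else if w = 5 then 4 else if w = 6 then 1 else if w = 7 then 5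
  else if w = 8 then 4 else if w = 9 then 4 else if w = 10 then 5 else if w = 12 then 4
  else if w % 2 = 1 then (w - 9) / 2 else (w - 12) / 2

def Yd (w : ℕ) : ℕ :=
  if w = 4 then 0 else if w = 5 then 0 else if w = 6 then 0 else if w = 7 then 0
  else if w = 8 then 1 else if w = 9 then 0 else if w = 10 then 1 else if w = 12 then 1
  else if w % 2 = 1 then 4 else 5

def Ymk (w : ℕ) : Multiset ℕ :=
  if w = 4 then {5} else if w = 6 then {7} else if w = 9 then {4} else if w = 12 then {4} else 0

/-- the injection on multisets of parts -/
def enc (L : ℕ) (s : Multiset ℕ) : Multiset ℕ :=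
  if 2 ≤ s.count 3 ∨ 1 ≤ s.count L then
    pack ((3 * s.count 3 + L * s.count L -
            3 * (2 * s.count L + (3 * s.count 3 + L * s.count L) % 2)) / 2)
         (2 * s.count L + (3 * s.count 3 + L * s.count L) % 2)
         (s.filter (fun x => ¬(x = 3 ∨ x = L)))
  else if s.count 3 = 1 then
    pack (Yc (mmin (s.erase 3))) (Yd (mmin (s.erase 3)))
      (Ymk (mmin (s.erase 3)) + (s.erase 3).erase (mmin (s.erase 3)))
  else pack (Xc (mmin s)) (Xd (mmin s)) (Xmk (mmin s) + s.erase (mmin s))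

def decBody (L c d : ℕ) (ψ : Multiset ℕ) : Multiset ℕ :=
  if L * (d / 2) ≤ 2 * c + 3 * d ∧ (2 * c + 3 * d - L * (d / 2)) % 3 = 0 then
    Multiset.replicate ((2 * c + 3 * d - L * (d / 2)) / 3) 3 +
      Multiset.replicate (d / 2) L + ψ
  else if d = 2 ∨ d = 3 then (2 * c + 3 * d) ::ₘ ψ
  else if d = 4 ∨ d = 5 then 3 ::ₘ (2 * c + 3 * d - 3) ::ₘ ψ
  else if c = 2 ∧ d = 0 then 4 ::ₘ ψ
  else if c = 1 ∧ d = 1 then (if 4 ∈ ψ then 9 ::ₘ ψ.erase 4 else 5 ::ₘ ψ)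
  else if c = 1 ∧ d = 0 then
    (if 5 ∈ ψ then 3 ::ₘ 4 ::ₘ ψ.erase 5 else if 4 ∈ ψ then 6 ::ₘ ψ.erase 4
     else 3 ::ₘ 6 ::ₘ ψ.erase 7)
  else if c = 2 ∧ d = 1 then 7 ::ₘ ψ
  else if c = 4 ∧ d = 0 then (if 4 ∈ ψ then 3 ::ₘ 9 ::ₘ ψ.erase 4 else 3 ::ₘ 5 ::ₘ ψ)
  else if c = 5 ∧ d = 0 then 3 ::ₘ 7 ::ₘ ψ
  else if c = 5 ∧ d = 1 then 3 ::ₘ 10 ::ₘ ψ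
  else if c = 4 ∧ d = 1 then (if 4 ∈ ψ then 3 ::ₘ 12 ::ₘ ψ.erase 4 else 3 ::ₘ 8 ::ₘ ψ)
  else 0

def dec (L : ℕ) (μ : Multiset ℕ) : Multiset ℕ :=
  decBody L (μ.count 2) (μ.count 3) (μ.filter (fun x => ¬(x = 2 ∨ x = 3)))

lemma pack_count2 {t : Multiset ℕ} (ht : ∀ x ∈ t, 4 ≤ x) (c d : ℕ) :
    (pack c d t).count 2 = c := by
  have h2 : t.count 2 = 0 := by
    rw [Multiset.count_eq_zero]
    intro h; have := ht 2 h; omega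
  simp [pack, Multiset.count_replicate, h2]

lemma pack_count3 {t : Multiset ℕ} (ht : ∀ x ∈ t, 4 ≤ x) (c d : ℕ) :
    (pack c d t).count 3 = d := by
  have h3 : t.count 3 = 0 := by
    rw [Multiset.count_eq_zero]
    intro h; have := ht 3 h; omega
  simp [pack, Multiset.count_replicate, h3]

lemma pack_filter {t : Multiset ℕ} (ht : ∀ x ∈ t, 4 ≤ x) (c d : ℕ) :
    (pack c d t).filter (fun x => ¬(x = 2 ∨ x = 3)) = t := by
  rw [pack, Multiset.filter_add, Multiset.filter_add]
  rw [Multiset.filter_eq_nil.mpr, Multiset.filter_eq_nil.mpr, Multiset.filter_eq_self.mpr]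
  · simp
  · intro x hx; have := ht x hx; omega
  · intro x hx; rw [Multiset.eq_of_mem_replicate hx]; simp
  · intro x hx; rw [Multiset.eq_of_mem_replicate hx]; simp

lemma pack_sum (c d : ℕ) (t : Multiset ℕ) : (pack c d t).sum = 2 * c + 3 * d + t.sum := by
  simp [pack, Multiset.sum_replicate]; ring

lemma mem_pack {x c d : ℕ} {t : Multiset ℕ} :
    x ∈ pack c d t ↔ (x = 2 ∧ 1 ≤ c) ∨ (x = 3 ∧ 1 ≤ d) ∨ x ∈ t := by
  simp only [pack, Multiset.mem_add, Multiset.mem_replicate]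
  constructor
  · rintro ((⟨h1, h2⟩ | ⟨h1, h2⟩) | h)
    · exact Or.inl ⟨h2, by omega⟩
    · exact Or.inr (Or.inl ⟨h2, by omega⟩)
    · exact Or.inr (Or.inr h)
  · rintro (⟨rfl, h⟩ | ⟨rfl, h⟩ | h)
    · exact Or.inl (Or.inl ⟨by omega, rfl⟩)
    · exact Or.inl (Or.inr ⟨by omega, rfl⟩)
    · exact Or.inr h

lemma dec_pack {L c d : ℕ} {t : Multiset ℕ} (ht : ∀ x ∈ t, 4 ≤ x) :
    dec L (pack c d t) = decBody L c d t := by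
  rw [dec, pack_count2 ht, pack_count3 ht, pack_filter ht]

/-- decomposition of a multiset into its 3s, Ls and the rest -/
lemma decomp (L : ℕ) (hL : 11 ≤ L) (s : Multiset ℕ) :
    Multiset.replicate (s.count 3) 3 + Multiset.replicate (s.count L) L +
      s.filter (fun x => ¬(x = 3 ∨ x = L)) = s := by
  ext x
  simp only [Multiset.count_add, Multiset.count_replicate, Multiset.count_filter]
  by_cases h3 : x = 3
  · subst h3
    rw [if_pos rfl, if_neg (by omega : ¬(L = 3)), if_neg (by simp)]
    omega
  · by_cases hxL : x = L
    · rw [hxL, if_neg (by omega : ¬(3 = L)), if_pos rfl, if_neg (by simp)]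
      omega
    · rw [if_neg (fun h => h3 h.symm), if_neg (fun h => hxL h.symm),
        if_pos (by simp [h3, hxL])]
      omega

theorem dec_enc (L : ℕ) (hL : 11 ≤ L) (s : Multiset ℕ) (hne : s ≠ 0)
    (hmem : ∀ x ∈ s, 3 ≤ x ∧ x ≤ L + 2) (hsum : 4 ≤ s.sum) : dec L (enc L s) = s := by
  by_cases hmain : 2 ≤ s.count 3 ∨ 1 ≤ s.count L
  · -- main branch
    have hψ0 : ∀ x ∈ s.filter (fun x => ¬(x = 3 ∨ x = L)), 4 ≤ x := by
      intro x hx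
      rw [Multiset.mem_filter] at hx
      have h1 := (hmem x hx.1).1
      have h2 := hx.2
      simp only [not_or] at h2
      omega
    obtain ⟨a, ha⟩ : ∃ x, s.count 3 = x := ⟨_, rfl⟩
    obtain ⟨b, hb⟩ : ∃ x, s.count L = x := ⟨_, rfl⟩
    obtain ⟨lb, hlb⟩ : ∃ x, L * b = x := ⟨_, rfl⟩
    have h11 : 11 * b ≤ lb := by rw [← hlb]; exact Nat.mul_le_mul_right b hL
    simp only [enc]
    rw [if_pos hmain, ha, hb, hlb]
    rw [dec_pack hψ0, decBody]
    rw [ha, hb] at hmain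
    have hd2 : (2 * b + (3 * a + lb) % 2) / 2 = b := by omega
    rw [hd2, hlb]
    have hC : 2 * ((3 * a + lb - 3 * (2 * b + (3 * a + lb) % 2)) / 2) +
        3 * (2 * b + (3 * a + lb) % 2) = 3 * a + lb := by omega
    rw [hC]
    rw [if_pos ⟨by omega, by omega⟩]
    have hA : (3 * a + lb - lb) / 3 = a := by omega
    rw [hA, ← ha, ← hb]
    exact decomp L hL s
  · -- not main : count 3 ≤ 1 and count L = 0
    push_neg at hmain
    have hb0 : s.count L = 0 := by omega
    have hLn : L ∉ s := by rw [← Multiset.count_eq_zero]; exact hb0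
    by_cases ha1 : s.count 3 = 1
    · -- Y branch
      have h31 : (3:ℕ) ∈ s := by rw [← Multiset.count_pos, ha1]; omega
      have hcons : (3:ℕ) ::ₘ s.erase 3 = s := Multiset.cons_erase h31
      have hrne : s.erase 3 ≠ 0 := by
        intro h0
        rw [h0] at hcons
        have : s.sum = 3 := by rw [← hcons]; simp
        omega
      have h3e : (3:ℕ) ∉ s.erase 3 := by
        rw [← Multiset.count_eq_zero, Multiset.count_erase_self, ha1]
      simp only [enc]
      rw [if_neg (by omega), if_pos ha1]
      obtain ⟨w, hw⟩ : ∃ x, mmin (s.erase 3) = x := ⟨_, rfl⟩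
      rw [hw]
      have hws : w ∈ s.erase 3 := hw ▸ mmin_mem hrne
      have hwss : w ∈ s := Multiset.mem_of_mem_erase hws
      have hw4 : 4 ≤ w := by
        have h1 := (hmem w hwss).1
        have : w ≠ 3 := fun h => h3e (h ▸ hws)
        omega
      have hwL2 : w ≤ L + 2 := (hmem w hwss).2
      have hwL : w ≠ L := fun h => hLn (h ▸ hwss)
      have hers : ∀ x ∈ (s.erase 3).erase w, 4 ≤ x ∧ x ≤ L + 2 ∧ x ≠ L ∧ w ≤ x := by
        intro x hx
        have hxe : x ∈ s.erase 3 := Multiset.mem_of_mem_erase hx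
        have hxs : x ∈ s := Multiset.mem_of_mem_erase hxe
        have h1 := hmem x hxs
        have hx3 : x ≠ 3 := fun h => h3e (h ▸ hxe)
        have hxL : x ≠ L := fun h => hLn (h ▸ hxs)
        exact ⟨by omega, h1.2, hxL, hw ▸ mmin_le hxe⟩
      have ht : ∀ x ∈ (s.erase 3).erase w, 4 ≤ x := fun x hx => (hers x hx).1
      have hcons2 : w ::ₘ (s.erase 3).erase w = s.erase 3 := Multiset.cons_erase hws
      rcases (by omega : w = 4 ∨ w = 5 ∨ w = 6 ∨ w = 7 ∨ w = 8 ∨ w = 9 ∨ w = 10 ∨ w = 12 ∨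
          (w % 2 = 1 ∧ 11 ≤ w) ∨ (w % 2 = 0 ∧ 14 ≤ w)) with h|h|h|h|h|h|h|h|h|h
      · subst h
        have e1 : Yc 4 = 1 := by norm_num [Yc]
        have e2 : Yd 4 = 0 := by norm_num [Yd]
        have e3 : Ymk 4 = {5} := by norm_num [Ymk]
        have hsing : ({5} : Multiset ℕ) + (s.erase 3).erase 4 = 5 ::ₘ (s.erase 3).erase 4 :=
          Multiset.singleton_add 5 _
        have ht' : ∀ x ∈ (5 : ℕ) ::ₘ (s.erase 3).erase 4, 4 ≤ x := by
          intro x hx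
          rcases Multiset.mem_cons.mp hx with rfl | hx
          · omega
          · exact ht x hx
        rw [e1, e2, e3, hsing, dec_pack ht', decBody]
        rw [if_neg (by omega), if_neg (by omega), if_neg (by omega),
          if_neg (by omega : ¬((1:ℕ) = 2 ∧ (0:ℕ) = 0)),
          if_neg (by omega : ¬((1:ℕ) = 1 ∧ (0:ℕ) = 1)),
          if_pos (by omega : (1:ℕ) = 1 ∧ (0:ℕ) = 0),
          if_pos (Multiset.mem_cons_self 5 _), Multiset.erase_cons_head]
        conv_rhs => rw [← hcons, ← hcons2]
      · subst h
        have e1 : Yc 5 = 4 := by norm_num [Yc]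
        have e2 : Yd 5 = 0 := by norm_num [Yd]
        have e3 : Ymk 5 = 0 := by norm_num [Ymk]
        have h4 : (4 : ℕ) ∉ (s.erase 3).erase 5 := fun hx => by
          have := (hers 4 hx).2.2.2; omega
        rw [e1, e2, e3, zero_add, dec_pack ht, decBody]
        rw [if_neg (by omega), if_neg (by omega), if_neg (by omega),
          if_neg (by omega : ¬((4:ℕ) = 2 ∧ (0:ℕ) = 0)),
          if_neg (by omega : ¬((4:ℕ) = 1 ∧ (0:ℕ) = 1)),
          if_neg (by omega : ¬((4:ℕ) = 1 ∧ (0:ℕ) = 0)),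
          if_neg (by omega : ¬((4:ℕ) = 2 ∧ (0:ℕ) = 1)),
          if_pos (by omega : (4:ℕ) = 4 ∧ (0:ℕ) = 0), if_neg h4]
        conv_rhs => rw [← hcons, ← hcons2]
      · subst h
        have e1 : Yc 6 = 1 := by norm_num [Yc]
        have e2 : Yd 6 = 0 := by norm_num [Yd]
        have e3 : Ymk 6 = {7} := by norm_num [Ymk]
        have hsing : ({7} : Multiset ℕ) + (s.erase 3).erase 6 = 7 ::ₘ (s.erase 3).erase 6 :=
          Multiset.singleton_add 7 _
        have ht' : ∀ x ∈ (7 : ℕ) ::ₘ (s.erase 3).erase 6, 4 ≤ x := by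
          intro x hx
          rcases Multiset.mem_cons.mp hx with rfl | hx
          · omega
          · exact ht x hx
        have h5 : (5 : ℕ) ∉ (7 : ℕ) ::ₘ (s.erase 3).erase 6 := by
          intro hx
          rcases Multiset.mem_cons.mp hx with h | hx
          · omega
          · have := (hers 5 hx).2.2.2; omega
        have h4 : (4 : ℕ) ∉ (7 : ℕ) ::ₘ (s.erase 3).erase 6 := by
          intro hx
          rcases Multiset.mem_cons.mp hx with h | hx
          · omega
          · have := (hers 4 hx).2.2.2; omega
        rw [e1, e2, e3, hsing, dec_pack ht', decBody]
        rw [if_neg (by omega), if_neg (by omega), if_neg (by omega),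
          if_neg (by omega : ¬((1:ℕ) = 2 ∧ (0:ℕ) = 0)),
          if_neg (by omega : ¬((1:ℕ) = 1 ∧ (0:ℕ) = 1)),
          if_pos (by omega : (1:ℕ) = 1 ∧ (0:ℕ) = 0),
          if_neg h5, if_neg h4, Multiset.erase_cons_head]
        conv_rhs => rw [← hcons, ← hcons2]
      · subst h
        have e1 : Yc 7 = 5 := by norm_num [Yc]
        have e2 : Yd 7 = 0 := by norm_num [Yd]
        have e3 : Ymk 7 = 0 := by norm_num [Ymk]
        rw [e1, e2, e3, zero_add, dec_pack ht, decBody]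
        rw [if_neg (by omega), if_neg (by omega), if_neg (by omega),
          if_neg (by omega : ¬((5:ℕ) = 2 ∧ (0:ℕ) = 0)),
          if_neg (by omega : ¬((5:ℕ) = 1 ∧ (0:ℕ) = 1)),
          if_neg (by omega : ¬((5:ℕ) = 1 ∧ (0:ℕ) = 0)),
          if_neg (by omega : ¬((5:ℕ) = 2 ∧ (0:ℕ) = 1)),
          if_neg (by omega : ¬((5:ℕ) = 4 ∧ (0:ℕ) = 0)),
          if_pos (by omega : (5:ℕ) = 5 ∧ (0:ℕ) = 0)]
        conv_rhs => rw [← hcons, ← hcons2]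
      · subst h
        have e1 : Yc 8 = 4 := by norm_num [Yc]
        have e2 : Yd 8 = 1 := by norm_num [Yd]
        have e3 : Ymk 8 = 0 := by norm_num [Ymk]
        have h4 : (4 : ℕ) ∉ (s.erase 3).erase 8 := fun hx => by
          have := (hers 4 hx).2.2.2; omega
        rw [e1, e2, e3, zero_add, dec_pack ht, decBody]
        rw [if_neg (by omega), if_neg (by omega), if_neg (by omega),
          if_neg (by omega : ¬((4:ℕ) = 2 ∧ (1:ℕ) = 0)),
          if_neg (by omega : ¬((4:ℕ) = 1 ∧ (1:ℕ) = 1)),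
          if_neg (by omega : ¬((4:ℕ) = 1 ∧ (1:ℕ) = 0)),
          if_neg (by omega : ¬((4:ℕ) = 2 ∧ (1:ℕ) = 1)),
          if_neg (by omega : ¬((4:ℕ) = 4 ∧ (1:ℕ) = 0)),
          if_neg (by omega : ¬((4:ℕ) = 5 ∧ (1:ℕ) = 0)),
          if_neg (by omega : ¬((4:ℕ) = 5 ∧ (1:ℕ) = 1)),
          if_pos (by omega : (4:ℕ) = 4 ∧ (1:ℕ) = 1), if_neg h4]
        conv_rhs => rw [← hcons, ← hcons2]
      · subst h
        have e1 : Yc 9 = 4 := by norm_num [Yc]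
        have e2 : Yd 9 = 0 := by norm_num [Yd]
        have e3 : Ymk 9 = {4} := by norm_num [Ymk]
        have hsing : ({4} : Multiset ℕ) + (s.erase 3).erase 9 = 4 ::ₘ (s.erase 3).erase 9 :=
          Multiset.singleton_add 4 _
        have ht' : ∀ x ∈ (4 : ℕ) ::ₘ (s.erase 3).erase 9, 4 ≤ x := by
          intro x hx
          rcases Multiset.mem_cons.mp hx with rfl | hx
          · omega
          · exact ht x hx
        rw [e1, e2, e3, hsing, dec_pack ht', decBody]
        rw [if_neg (by omega), if_neg (by omega), if_neg (by omega),
          if_neg (by omega : ¬((4:ℕ) = 2 ∧ (0:ℕ) = 0)),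
          if_neg (by omega : ¬((4:ℕ) = 1 ∧ (0:ℕ) = 1)),
          if_neg (by omega : ¬((4:ℕ) = 1 ∧ (0:ℕ) = 0)),
          if_neg (by omega : ¬((4:ℕ) = 2 ∧ (0:ℕ) = 1)),
          if_pos (by omega : (4:ℕ) = 4 ∧ (0:ℕ) = 0),
          if_pos (Multiset.mem_cons_self 4 _), Multiset.erase_cons_head]
        conv_rhs => rw [← hcons, ← hcons2]
      · subst h
        have e1 : Yc 10 = 5 := by norm_num [Yc]
        have e2 : Yd 10 = 1 := by norm_num [Yd]
        have e3 : Ymk 10 = 0 := by norm_num [Ymk]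
        rw [e1, e2, e3, zero_add, dec_pack ht, decBody]
        rw [if_neg (by omega), if_neg (by omega), if_neg (by omega),
          if_neg (by omega : ¬((5:ℕ) = 2 ∧ (1:ℕ) = 0)),
          if_neg (by omega : ¬((5:ℕ) = 1 ∧ (1:ℕ) = 1)),
          if_neg (by omega : ¬((5:ℕ) = 1 ∧ (1:ℕ) = 0)),
          if_neg (by omega : ¬((5:ℕ) = 2 ∧ (1:ℕ) = 1)),
          if_neg (by omega : ¬((5:ℕ) = 4 ∧ (1:ℕ) = 0)),
          if_neg (by omega : ¬((5:ℕ) = 5 ∧ (1:ℕ) = 0)),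
          if_pos (by omega : (5:ℕ) = 5 ∧ (1:ℕ) = 1)]
        conv_rhs => rw [← hcons, ← hcons2]
      · subst h
        have e1 : Yc 12 = 4 := by norm_num [Yc]
        have e2 : Yd 12 = 1 := by norm_num [Yd]
        have e3 : Ymk 12 = {4} := by norm_num [Ymk]
        have hsing : ({4} : Multiset ℕ) + (s.erase 3).erase 12 = 4 ::ₘ (s.erase 3).erase 12 :=
          Multiset.singleton_add 4 _
        have ht' : ∀ x ∈ (4 : ℕ) ::ₘ (s.erase 3).erase 12, 4 ≤ x := by
          intro x hx
          rcases Multiset.mem_cons.mp hx with rfl | hx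
          · omega
          · exact ht x hx
        rw [e1, e2, e3, hsing, dec_pack ht', decBody]
        rw [if_neg (by omega), if_neg (by omega), if_neg (by omega),
          if_neg (by omega : ¬((4:ℕ) = 2 ∧ (1:ℕ) = 0)),
          if_neg (by omega : ¬((4:ℕ) = 1 ∧ (1:ℕ) = 1)),
          if_neg (by omega : ¬((4:ℕ) = 1 ∧ (1:ℕ) = 0)),
          if_neg (by omega : ¬((4:ℕ) = 2 ∧ (1:ℕ) = 1)),
          if_neg (by omega : ¬((4:ℕ) = 4 ∧ (1:ℕ) = 0)),
          if_neg (by omega : ¬((4:ℕ) = 5 ∧ (1:ℕ) = 0)),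
          if_neg (by omega : ¬((4:ℕ) = 5 ∧ (1:ℕ) = 1)),
          if_pos (by omega : (4:ℕ) = 4 ∧ (1:ℕ) = 1),
          if_pos (Multiset.mem_cons_self 4 _), Multiset.erase_cons_head]
        conv_rhs => rw [← hcons, ← hcons2]
      · -- w odd, w ≥ 11
        have e1 : Yc w = (w - 9) / 2 := by
          rw [Yc, if_neg (by omega), if_neg (by omega), if_neg (by omega), if_neg (by omega),
            if_neg (by omega), if_neg (by omega), if_neg (by omega), if_neg (by omega),
            if_pos h.1]
        have e2 : Yd w = 4 := by
          rw [Yd, if_neg (by omega), if_neg (by omega), if_neg (by omega), if_neg (by omega),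
            if_neg (by omega), if_neg (by omega), if_neg (by omega), if_neg (by omega),
            if_pos h.1]
        have e3 : Ymk w = 0 := by
          rw [Ymk, if_neg (by omega), if_neg (by omega), if_neg (by omega), if_neg (by omega)]
        have hS : 2 * ((w - 9) / 2) + 3 * 4 = w + 3 := by omega
        rw [e1, e2, e3, zero_add, dec_pack ht, decBody, hS]
        rw [if_neg (by omega : ¬(L * (4 / 2) ≤ w + 3 ∧ (w + 3 - L * (4 / 2)) % 3 = 0)),
          if_neg (by omega : ¬((4:ℕ) = 2 ∨ (4:ℕ) = 3)),
          if_pos (by omega : (4:ℕ) = 4 ∨ (4:ℕ) = 5)]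
        rw [(by omega : w + 3 - 3 = w)]; conv_rhs => rw [← hcons, ← hcons2]
      · -- w even, w ≥ 14
        have e1 : Yc w = (w - 12) / 2 := by
          rw [Yc, if_neg (by omega), if_neg (by omega), if_neg (by omega), if_neg (by omega),
            if_neg (by omega), if_neg (by omega), if_neg (by omega), if_neg (by omega),
            if_neg (by omega)]
        have e2 : Yd w = 5 := by
          rw [Yd, if_neg (by omega), if_neg (by omega), if_neg (by omega), if_neg (by omega),
            if_neg (by omega), if_neg (by omega), if_neg (by omega), if_neg (by omega),
            if_neg (by omega)]
        have e3 : Ymk w = 0 := by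
          rw [Ymk, if_neg (by omega), if_neg (by omega), if_neg (by omega), if_neg (by omega)]
        have hS : 2 * ((w - 12) / 2) + 3 * 5 = w + 3 := by omega
        rw [e1, e2, e3, zero_add, dec_pack ht, decBody, hS]
        rw [if_neg (by omega : ¬(L * (5 / 2) ≤ w + 3 ∧ (w + 3 - L * (5 / 2)) % 3 = 0)),
          if_neg (by omega : ¬((5:ℕ) = 2 ∨ (5:ℕ) = 3)),
          if_pos (by omega : (5:ℕ) = 4 ∨ (5:ℕ) = 5)]
        rw [(by omega : w + 3 - 3 = w)]; conv_rhs => rw [← hcons, ← hcons2]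
    · -- X branch
      have ha0 : s.count 3 = 0 := by omega
      have h3n : (3 : ℕ) ∉ s := by rw [← Multiset.count_eq_zero]; exact ha0
      simp only [enc]
      rw [if_neg (by omega), if_neg ha1]
      obtain ⟨m, hm⟩ : ∃ x, mmin s = x := ⟨_, rfl⟩
      rw [hm]
      have hms : m ∈ s := hm ▸ mmin_mem hne
      have hm4 : 4 ≤ m := by
        have h1 := (hmem m hms).1
        have : m ≠ 3 := fun h => h3n (h ▸ hms)
        omega
      have hmL2 : m ≤ L + 2 := (hmem m hms).2
      have hmL : m ≠ L := fun h => hLn (h ▸ hms)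
      have hers : ∀ x ∈ s.erase m, 4 ≤ x ∧ x ≤ L + 2 ∧ x ≠ L ∧ m ≤ x := by
        intro x hx
        have hxs : x ∈ s := Multiset.mem_of_mem_erase hx
        have h1 := hmem x hxs
        have hx3 : x ≠ 3 := fun h => h3n (h ▸ hxs)
        have hxL : x ≠ L := fun h => hLn (h ▸ hxs)
        exact ⟨by omega, h1.2, hxL, hm ▸ mmin_le hxs⟩
      have ht : ∀ x ∈ s.erase m, 4 ≤ x := fun x hx => (hers x hx).1
      have hcons : m ::ₘ s.erase m = s := Multiset.cons_erase hms
      rcases (by omega : m = 4 ∨ m = 5 ∨ m = 6 ∨ m = 7 ∨ m = 9 ∨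
          (m % 2 = 0 ∧ 8 ≤ m) ∨ (m % 2 = 1 ∧ 11 ≤ m)) with h|h|h|h|h|h|h
      · subst h
        have e1 : Xc 4 = 2 := by norm_num [Xc]
        have e2 : Xd 4 = 0 := by norm_num [Xd]
        have e3 : Xmk 4 = 0 := by norm_num [Xmk]
        rw [e1, e2, e3, zero_add, dec_pack ht, decBody]
        rw [if_neg (by omega), if_neg (by omega), if_neg (by omega),
          if_pos (by omega : (2:ℕ) = 2 ∧ (0:ℕ) = 0)]
        exact hcons
      · subst h
        have e1 : Xc 5 = 1 := by norm_num [Xc]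
        have e2 : Xd 5 = 1 := by norm_num [Xd]
        have e3 : Xmk 5 = 0 := by norm_num [Xmk]
        have h4 : (4 : ℕ) ∉ s.erase 5 := fun hx => by have := (hers 4 hx).2.2.2; omega
        rw [e1, e2, e3, zero_add, dec_pack ht, decBody]
        rw [if_neg (by omega), if_neg (by omega), if_neg (by omega),
          if_neg (by omega : ¬((1:ℕ) = 2 ∧ (1:ℕ) = 0)),
          if_pos (by omega : (1:ℕ) = 1 ∧ (1:ℕ) = 1), if_neg h4]
        exact hcons
      · subst h
        have e1 : Xc 6 = 1 := by norm_num [Xc]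
        have e2 : Xd 6 = 0 := by norm_num [Xd]
        have e3 : Xmk 6 = {4} := by norm_num [Xmk]
        have hsing : ({4} : Multiset ℕ) + s.erase 6 = 4 ::ₘ s.erase 6 :=
          Multiset.singleton_add 4 _
        have ht' : ∀ x ∈ (4 : ℕ) ::ₘ s.erase 6, 4 ≤ x := by
          intro x hx
          rcases Multiset.mem_cons.mp hx with rfl | hx
          · exact le_refl 4
          · exact ht x hx
        have h5 : (5 : ℕ) ∉ (4 : ℕ) ::ₘ s.erase 6 := by
          intro hx
          rcases Multiset.mem_cons.mp hx with h | hx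
          · omega
          · have := (hers 5 hx).2.2.2; omega
        rw [e1, e2, e3, hsing, dec_pack ht', decBody]
        rw [if_neg (by omega), if_neg (by omega), if_neg (by omega),
          if_neg (by omega : ¬((1:ℕ) = 2 ∧ (0:ℕ) = 0)),
          if_neg (by omega : ¬((1:ℕ) = 1 ∧ (0:ℕ) = 1)),
          if_pos (by omega : (1:ℕ) = 1 ∧ (0:ℕ) = 0), if_neg h5,
          if_pos (Multiset.mem_cons_self 4 _), Multiset.erase_cons_head]
        exact hcons
      · subst h
        have e1 : Xc 7 = 2 := by norm_num [Xc]
        have e2 : Xd 7 = 1 := by norm_num [Xd]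
        have e3 : Xmk 7 = 0 := by norm_num [Xmk]
        rw [e1, e2, e3, zero_add, dec_pack ht, decBody]
        rw [if_neg (by omega), if_neg (by omega), if_neg (by omega),
          if_neg (by omega : ¬((2:ℕ) = 2 ∧ (1:ℕ) = 0)),
          if_neg (by omega : ¬((2:ℕ) = 1 ∧ (1:ℕ) = 1)),
          if_neg (by omega : ¬((2:ℕ) = 1 ∧ (1:ℕ) = 0)),
          if_pos (by omega : (2:ℕ) = 2 ∧ (1:ℕ) = 1)]
        exact hcons
      · subst h
        have e1 : Xc 9 = 1 := by norm_num [Xc]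
        have e2 : Xd 9 = 1 := by norm_num [Xd]
        have e3 : Xmk 9 = {4} := by norm_num [Xmk]
        have hsing : ({4} : Multiset ℕ) + s.erase 9 = 4 ::ₘ s.erase 9 :=
          Multiset.singleton_add 4 _
        have ht' : ∀ x ∈ (4 : ℕ) ::ₘ s.erase 9, 4 ≤ x := by
          intro x hx
          rcases Multiset.mem_cons.mp hx with rfl | hx
          · exact le_refl 4
          · exact ht x hx
        rw [e1, e2, e3, hsing, dec_pack ht', decBody]
        rw [if_neg (by omega), if_neg (by omega), if_neg (by omega),
          if_neg (by omega : ¬((1:ℕ) = 2 ∧ (1:ℕ) = 0)),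
          if_pos (by omega : (1:ℕ) = 1 ∧ (1:ℕ) = 1),
          if_pos (Multiset.mem_cons_self 4 _), Multiset.erase_cons_head]
        exact hcons
      · -- m even, m ≥ 8
        have e1 : Xc m = (m - 6) / 2 := by
          rw [Xc, if_neg (by omega), if_neg (by omega), if_neg (by omega),
            if_neg (by omega), if_neg (by omega), if_pos h.1]
        have e2 : Xd m = 2 := by
          rw [Xd, if_neg (by omega), if_neg (by omega), if_neg (by omega),
            if_neg (by omega), if_neg (by omega), if_pos h.1]
        have e3 : Xmk m = 0 := by
          rw [Xmk, if_neg (by omega), if_neg (by omega)]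
        have hS : 2 * ((m - 6) / 2) + 3 * 2 = m := by omega
        rw [e1, e2, e3, zero_add, dec_pack ht, decBody, hS]
        rw [if_neg (by omega : ¬(L * (2 / 2) ≤ m ∧ (m - L * (2 / 2)) % 3 = 0)),
          if_pos (by omega : (2:ℕ) = 2 ∨ (2:ℕ) = 3)]
        exact hcons
      · -- m odd, m ≥ 11
        have e1 : Xc m = (m - 9) / 2 := by
          rw [Xc, if_neg (by omega), if_neg (by omega), if_neg (by omega),
            if_neg (by omega), if_neg (by omega), if_neg (by omega)]
        have e2 : Xd m = 3 := by
          rw [Xd, if_neg (by omega), if_neg (by omega), if_neg (by omega),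
            if_neg (by omega), if_neg (by omega), if_neg (by omega)]
        have e3 : Xmk m = 0 := by
          rw [Xmk, if_neg (by omega), if_neg (by omega)]
        have hS : 2 * ((m - 9) / 2) + 3 * 3 = m := by omega
        rw [e1, e2, e3, zero_add, dec_pack ht, decBody, hS]
        rw [if_neg (by omega : ¬(L * (3 / 2) ≤ m ∧ (m - L * (3 / 2)) % 3 = 0)),
          if_pos (by omega : (3:ℕ) = 2 ∨ (3:ℕ) = 3)]
        exact hcons

lemma pack_good {L c d : ℕ} {t : Multiset ℕ} (hL : 11 ≤ L) (hc : 1 ≤ c)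
    (ht : ∀ x ∈ t, 2 ≤ x ∧ x ≤ L + 2 ∧ x ≠ L) :
    2 ∈ pack c d t ∧ (∀ x ∈ pack c d t, 2 ≤ x ∧ x ≤ L + 2) ∧ L ∉ pack c d t := by
  refine ⟨mem_pack.mpr (Or.inl ⟨rfl, hc⟩), ?_, ?_⟩
  · intro x hx
    rcases mem_pack.mp hx with ⟨rfl, _⟩ | ⟨rfl, _⟩ | h
    · omega
    · omega
    · exact ⟨(ht x h).1, (ht x h).2.1⟩
  · intro hx
    rcases mem_pack.mp hx with ⟨h, _⟩ | ⟨h, _⟩ | h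
    · omega
    · omega
    · exact (ht L h).2.2 rfl

lemma X_arith (m : ℕ) (hm : 4 ≤ m) :
    2 * Xc m + 3 * Xd m + (Xmk m).sum = m ∧ 1 ≤ Xc m ∧ ∀ x ∈ Xmk m, 4 ≤ x ∧ x ≤ 7 := by
  rcases (by omega : m = 4 ∨ m = 5 ∨ m = 6 ∨ m = 7 ∨ m = 9 ∨
      (m % 2 = 0 ∧ 8 ≤ m) ∨ (m % 2 = 1 ∧ 11 ≤ m)) with h|h|h|h|h|h|h
  · subst h; norm_num [Xc, Xd, Xmk]
  · subst h; norm_num [Xc, Xd, Xmk]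
  · subst h
    norm_num [Xc, Xd, Xmk]
  · subst h; norm_num [Xc, Xd, Xmk]
  · subst h
    norm_num [Xc, Xd, Xmk]
  · have e1 : Xc m = (m - 6) / 2 := by
      rw [Xc, if_neg (by omega), if_neg (by omega), if_neg (by omega),
        if_neg (by omega), if_neg (by omega), if_pos h.1]
    have e2 : Xd m = 2 := by
      rw [Xd, if_neg (by omega), if_neg (by omega), if_neg (by omega),
        if_neg (by omega), if_neg (by omega), if_pos h.1]
    have e3 : Xmk m = 0 := by rw [Xmk, if_neg (by omega), if_neg (by omega)]
    rw [e1, e2, e3]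
    refine ⟨by simp; omega, by omega, by simp⟩
  · have e1 : Xc m = (m - 9) / 2 := by
      rw [Xc, if_neg (by omega), if_neg (by omega), if_neg (by omega),
        if_neg (by omega), if_neg (by omega), if_neg (by omega)]
    have e2 : Xd m = 3 := by
      rw [Xd, if_neg (by omega), if_neg (by omega), if_neg (by omega),
        if_neg (by omega), if_neg (by omega), if_neg (by omega)]
    have e3 : Xmk m = 0 := by rw [Xmk, if_neg (by omega), if_neg (by omega)]
    rw [e1, e2, e3]
    refine ⟨by simp; omega, by omega, by simp⟩

lemma Y_arith (w : ℕ) (hw : 4 ≤ w) :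
    2 * Yc w + 3 * Yd w + (Ymk w).sum = w + 3 ∧ 1 ≤ Yc w ∧ ∀ x ∈ Ymk w, 4 ≤ x ∧ x ≤ 7 := by
  rcases (by omega : w = 4 ∨ w = 5 ∨ w = 6 ∨ w = 7 ∨ w = 8 ∨ w = 9 ∨ w = 10 ∨ w = 12 ∨
      (w % 2 = 1 ∧ 11 ≤ w) ∨ (w % 2 = 0 ∧ 14 ≤ w)) with h|h|h|h|h|h|h|h|h|h
  · subst h
    norm_num [Yc, Yd, Ymk]
  · subst h; norm_num [Yc, Yd, Ymk]
  · subst h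
    norm_num [Yc, Yd, Ymk]
  · subst h; norm_num [Yc, Yd, Ymk]
  · subst h; norm_num [Yc, Yd, Ymk]
  · subst h
    norm_num [Yc, Yd, Ymk]
  · subst h; norm_num [Yc, Yd, Ymk]
  · subst h
    norm_num [Yc, Yd, Ymk]
  · have e1 : Yc w = (w - 9) / 2 := by
      rw [Yc, if_neg (by omega), if_neg (by omega), if_neg (by omega), if_neg (by omega),
        if_neg (by omega), if_neg (by omega), if_neg (by omega), if_neg (by omega),
        if_pos h.1]
    have e2 : Yd w = 4 := by
      rw [Yd, if_neg (by omega), if_neg (by omega), if_neg (by omega), if_neg (by omega),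
        if_neg (by omega), if_neg (by omega), if_neg (by omega), if_neg (by omega),
        if_pos h.1]
    have e3 : Ymk w = 0 := by
      rw [Ymk, if_neg (by omega), if_neg (by omega), if_neg (by omega), if_neg (by omega)]
    rw [e1, e2, e3]
    refine ⟨by simp; omega, by omega, by simp⟩
  · have e1 : Yc w = (w - 12) / 2 := by
      rw [Yc, if_neg (by omega), if_neg (by omega), if_neg (by omega), if_neg (by omega),
        if_neg (by omega), if_neg (by omega), if_neg (by omega), if_neg (by omega),
        if_neg (by omega)]
    have e2 : Yd w = 5 := by
      rw [Yd, if_neg (by omega), if_neg (by omega), if_neg (by omega), if_neg (by omega),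
        if_neg (by omega), if_neg (by omega), if_neg (by omega), if_neg (by omega),
        if_neg (by omega)]
    have e3 : Ymk w = 0 := by
      rw [Ymk, if_neg (by omega), if_neg (by omega), if_neg (by omega), if_neg (by omega)]
    rw [e1, e2, e3]
    refine ⟨by simp; omega, by omega, by simp⟩

theorem enc_spec (L : ℕ) (hL : 11 ≤ L) (s : Multiset ℕ) (hne : s ≠ 0)
    (hmem : ∀ x ∈ s, 3 ≤ x ∧ x ≤ L + 2) (hsum : 4 ≤ s.sum) :
    (enc L s).sum = s.sum ∧ 2 ∈ enc L s ∧
      (∀ x ∈ enc L s, 2 ≤ x ∧ x ≤ L + 2) ∧ L ∉ enc L s := by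
  by_cases hmain : 2 ≤ s.count 3 ∨ 1 ≤ s.count L
  · have hdec := decomp L hL s
    have hsums : 3 * s.count 3 + L * s.count L +
        (s.filter (fun x => ¬(x = 3 ∨ x = L))).sum = s.sum := by
      conv_rhs => rw [← hdec]
      simp [Multiset.sum_replicate, mul_comm]
    have hψ0 : ∀ x ∈ s.filter (fun x => ¬(x = 3 ∨ x = L)), 2 ≤ x ∧ x ≤ L + 2 ∧ x ≠ L := by
      intro x hx
      rw [Multiset.mem_filter] at hx
      have h1 := hmem x hx.1
      have h2 := hx.2
      simp only [not_or] at h2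
      exact ⟨by omega, h1.2, h2.2⟩
    simp only [enc]
    rw [if_pos hmain]
    obtain ⟨a, ha⟩ : ∃ x, s.count 3 = x := ⟨_, rfl⟩
    obtain ⟨b, hb⟩ : ∃ x, s.count L = x := ⟨_, rfl⟩
    obtain ⟨lb, hlb⟩ : ∃ x, L * b = x := ⟨_, rfl⟩
    have h11 : 11 * b ≤ lb := by rw [← hlb]; exact Nat.mul_le_mul_right b hL
    rw [ha, hb, hlb] at hsums ⊢
    rw [ha, hb] at hmain
    have hc : 1 ≤ (3 * a + lb - 3 * (2 * b + (3 * a + lb) % 2)) / 2 := by omega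
    obtain ⟨hg1, hg2, hg3⟩ := pack_good hL hc hψ0
    refine ⟨?_, hg1, hg2, hg3⟩
    rw [pack_sum, ← hsums]
    omega
  · push_neg at hmain
    have hb0 : s.count L = 0 := by omega
    have hLn : L ∉ s := by rw [← Multiset.count_eq_zero]; exact hb0
    by_cases ha1 : s.count 3 = 1
    · have h31 : (3:ℕ) ∈ s := by rw [← Multiset.count_pos, ha1]; omega
      have hcons : (3:ℕ) ::ₘ s.erase 3 = s := Multiset.cons_erase h31
      have hrne : s.erase 3 ≠ 0 := by
        intro h0
        rw [h0] at hcons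
        have : s.sum = 3 := by rw [← hcons]; simp
        omega
      have h3e : (3:ℕ) ∉ s.erase 3 := by
        rw [← Multiset.count_eq_zero, Multiset.count_erase_self, ha1]
      simp only [enc]
      rw [if_neg (by omega), if_pos ha1]
      obtain ⟨w, hw⟩ : ∃ x, mmin (s.erase 3) = x := ⟨_, rfl⟩
      rw [hw]
      have hws : w ∈ s.erase 3 := hw ▸ mmin_mem hrne
      have hwss : w ∈ s := Multiset.mem_of_mem_erase hws
      have hw4 : 4 ≤ w := by
        have h1 := (hmem w hwss).1
        have : w ≠ 3 := fun h => h3e (h ▸ hws)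
        omega
      obtain ⟨hY1, hY2, hY3⟩ := Y_arith w hw4
      have hcons2 : w ::ₘ (s.erase 3).erase w = s.erase 3 := Multiset.cons_erase hws
      have hts : ∀ x ∈ Ymk w + (s.erase 3).erase w, 2 ≤ x ∧ x ≤ L + 2 ∧ x ≠ L := by
        intro x hx
        rcases Multiset.mem_add.mp hx with hx | hx
        · have := hY3 x hx; exact ⟨by omega, by omega, by omega⟩
        · have hxs : x ∈ s := Multiset.mem_of_mem_erase (Multiset.mem_of_mem_erase hx)
          have h1 := hmem x hxs
          have hxL : x ≠ L := fun h => hLn (h ▸ hxs)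
          exact ⟨by omega, h1.2, hxL⟩
      obtain ⟨hg1, hg2, hg3⟩ := pack_good hL hY2 hts
      refine ⟨?_, hg1, hg2, hg3⟩
      rw [pack_sum, Multiset.sum_add]
      have hssum : s.sum = 3 + (w + ((s.erase 3).erase w).sum) := by
        conv_lhs => rw [← hcons, ← hcons2]
        simp
      omega
    · have ha0 : s.count 3 = 0 := by omega
      have h3n : (3 : ℕ) ∉ s := by rw [← Multiset.count_eq_zero]; exact ha0
      simp only [enc]
      rw [if_neg (by omega), if_neg ha1]
      obtain ⟨m, hm⟩ : ∃ x, mmin s = x := ⟨_, rfl⟩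
      rw [hm]
      have hms : m ∈ s := hm ▸ mmin_mem hne
      have hm4 : 4 ≤ m := by
        have h1 := (hmem m hms).1
        have : m ≠ 3 := fun h => h3n (h ▸ hms)
        omega
      obtain ⟨hX1, hX2, hX3⟩ := X_arith m hm4
      have hcons : m ::ₘ s.erase m = s := Multiset.cons_erase hms
      have hts : ∀ x ∈ Xmk m + s.erase m, 2 ≤ x ∧ x ≤ L + 2 ∧ x ≠ L := by
        intro x hx
        rcases Multiset.mem_add.mp hx with hx | hx
        · have := hX3 x hx; exact ⟨by omega, by omega, by omega⟩
        · have hxs : x ∈ s := Multiset.mem_of_mem_erase hx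
          have h1 := hmem x hxs
          have hxL : x ≠ L := fun h => hLn (h ▸ hxs)
          exact ⟨by omega, h1.2, hxL⟩
      obtain ⟨hg1, hg2, hg3⟩ := pack_good hL hX2 hts
      refine ⟨?_, hg1, hg2, hg3⟩
      rw [pack_sum, Multiset.sum_add]
      have hssum : s.sum = m + (s.erase m).sum := by
        conv_lhs => rw [← hcons]
        simp
      omega

def wtail (M : ℕ) : Multiset ℕ :=
  if M = 4 then {4} else Multiset.replicate (M / 5 - 1) 5 + {5 + M % 5}

lemma wtail_spec (M : ℕ) (hM : 4 ≤ M) :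
    wtail M ≠ 0 ∧ (∀ x ∈ wtail M, 4 ≤ x ∧ x ≤ 9) ∧ (wtail M).sum = M := by
  rw [wtail]
  by_cases h : M = 4
  · subst h
    rw [if_pos rfl]
    refine ⟨by simp, ?_, by simp⟩
    intro x hx; rw [Multiset.mem_singleton] at hx; omega
  · rw [if_neg h]
    have hM5 : 5 ≤ M := by omega
    have hd : 1 ≤ M / 5 := by omega
    refine ⟨?_, ?_, ?_⟩
    · intro h0
      have : (5 + M % 5) ∈ (0 : Multiset ℕ) := by
        rw [← h0]; exact Multiset.mem_add.mpr (Or.inr (Multiset.mem_singleton_self _))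
      simp at this
    · intro x hx
      rcases Multiset.mem_add.mp hx with hx | hx
      · rw [Multiset.eq_of_mem_replicate hx]; omega
      · rw [Multiset.mem_singleton] at hx; subst hx; omega
    · rw [Multiset.sum_add, Multiset.sum_replicate, Multiset.sum_singleton]
      simp only [smul_eq_mul]
      omega

def wit (N : ℕ) : Multiset ℕ := pack 2 2 (wtail (N - 10))

theorem wit_not_enc (L : ℕ) (hL : 11 ≤ L) (N : ℕ) (hN : 14 ≤ N) (s : Multiset ℕ)
    (hne : s ≠ 0) (hmem : ∀ x ∈ s, 3 ≤ x ∧ x ≤ L + 2) (hsum : s.sum = N) :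
    enc L s ≠ wit N := by
  intro he
  obtain ⟨hwne, hwmem, hwsum⟩ := wtail_spec (N - 10) (by omega)
  have h4 : 4 ≤ s.sum := by omega
  have hrt := dec_enc L hL s hne hmem h4
  rw [he, wit] at hrt
  have ht4 : ∀ x ∈ wtail (N - 10), 4 ≤ x := fun x hx => (hwmem x hx).1
  rw [dec_pack ht4, decBody] at hrt
  rw [if_neg (by omega : ¬(L * (2 / 2) ≤ 2 * 2 + 3 * 2 ∧
      (2 * 2 + 3 * 2 - L * (2 / 2)) % 3 = 0)),
    if_pos (by omega : (2:ℕ) = 2 ∨ (2:ℕ) = 3)] at hrt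
  have hrt' : (10 : ℕ) ::ₘ wtail (N - 10) = s := by
    rw [← hrt]
  -- now analyse enc L s with s = 10 ::ₘ wtail (N-10)
  have hsmem : ∀ x ∈ s, x = 10 ∨ (4 ≤ x ∧ x ≤ 9) := by
    intro x hx
    rw [← hrt'] at hx
    rcases Multiset.mem_cons.mp hx with rfl | hx
    · exact Or.inl rfl
    · exact Or.inr (hwmem x hx)
  have ha0 : s.count 3 = 0 := by
    rw [Multiset.count_eq_zero]
    intro h3; rcases hsmem 3 h3 with h | h <;> omega
  have hb0 : s.count L = 0 := by
    rw [Multiset.count_eq_zero]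
    intro hLs; rcases hsmem L hLs with h | h <;> omega
  rw [enc, if_neg (by omega), if_neg (by omega)] at he
  obtain ⟨m, hm⟩ : ∃ x, mmin s = x := ⟨_, rfl⟩
  rw [hm] at he
  have hms : m ∈ s := hm ▸ mmin_mem hne
  have hm9 : 4 ≤ m ∧ m ≤ 9 := by
    obtain ⟨x0, hx0⟩ := Multiset.exists_mem_of_ne_zero hwne
    have hx0s : x0 ∈ s := by
      rw [← hrt']; exact Multiset.mem_cons_of_mem hx0
    have hle : m ≤ x0 := hm ▸ mmin_le hx0s
    have h9 := (hwmem x0 hx0).2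
    have h4x := (hwmem x0 hx0).1
    rcases hsmem m hms with h | h <;> omega
  have hers4 : ∀ x ∈ Xmk m + s.erase m, 4 ≤ x := by
    intro x hx
    rcases Multiset.mem_add.mp hx with hx | hx
    · rcases (by omega : m = 4 ∨ m = 5 ∨ m = 6 ∨ m = 7 ∨ m = 8 ∨ m = 9) with
        h|h|h|h|h|h <;> subst h <;> simp [Xmk] at hx <;> omega
    · have hxs := Multiset.mem_of_mem_erase hx
      rcases hsmem x hxs with h | h <;> omega
  have hwt4 : ∀ x ∈ wtail (N - 10), 4 ≤ x := ht4
  rw [wit] at he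
  have hc2 := congrArg (Multiset.count 2) he
  have hc3 := congrArg (Multiset.count 3) he
  rw [pack_count2 hers4, pack_count2 hwt4] at hc2
  rw [pack_count3 hers4, pack_count3 hwt4] at hc3
  rcases (by omega : m = 4 ∨ m = 5 ∨ m = 6 ∨ m = 7 ∨ m = 8 ∨ m = 9) with h|h|h|h|h|h <;>
    subst h <;> simp [Xc, Xd] at hc2 hc3


theorem main_aux (L : ℕ) (hL : 11 ≤ L) (N : ℕ) (hN : 4 ≤ N) :
    ∃ f : {p : N.Partition // InD2 L p} → {p : N.Partition // InCStar2 L p},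
      Function.Injective f ∧ (14 ≤ N → ∃ q, q ∉ Set.range f) := by
  have hspec : ∀ p : N.Partition, InD2 L p →
      ((enc L p.parts).sum = p.parts.sum ∧ 2 ∈ enc L p.parts ∧
        (∀ x ∈ enc L p.parts, 2 ≤ x ∧ x ≤ L + 2) ∧ L ∉ enc L p.parts) := by
    intro p hp
    exact enc_spec L hL p.parts hp.1 hp.2 (by rw [p.parts_sum]; exact hN)
  refine ⟨fun p => ⟨⟨enc L p.1.parts, ?_, ?_⟩, ?_, ?_, ?_⟩, ?_, ?_⟩
  · intro i hi
    have := ((hspec p.1 p.2).2.2.1 i hi).1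
    omega
  · rw [(hspec p.1 p.2).1, p.1.parts_sum]
  · exact (hspec p.1 p.2).2.1
  · exact (hspec p.1 p.2).2.2.1
  · exact (hspec p.1 p.2).2.2.2
  · rintro ⟨p, hp⟩ ⟨q, hq⟩ h
    have hparts : enc L p.parts = enc L q.parts := congrArg (fun r => r.1.parts) h
    have h1 := dec_enc L hL p.parts hp.1 hp.2 (by rw [p.parts_sum]; exact hN)
    have h2 := dec_enc L hL q.parts hq.1 hq.2 (by rw [q.parts_sum]; exact hN)
    have hpq : p.parts = q.parts := by rw [← h1, ← h2, hparts]
    exact Subtype.ext (Nat.Partition.ext hpq)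
  · intro h14
    obtain ⟨hwne, hwmem, hwsum⟩ := wtail_spec (N - 10) (by omega)
    have hwit_mem : ∀ x ∈ wit N, 2 ≤ x ∧ x ≤ L + 2 ∧ x ≠ L := by
      intro x hx
      rcases mem_pack.mp hx with ⟨rfl, _⟩ | ⟨rfl, _⟩ | h
      · exact ⟨le_refl 2, by omega, by omega⟩
      · exact ⟨by omega, by omega, by omega⟩
      · have := hwmem x h
        exact ⟨by omega, by omega, by omega⟩
    refine ⟨⟨⟨wit N, ?_, ?_⟩, ?_, ?_, ?_⟩, ?_⟩
    · intro i hi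
      have := (hwit_mem i hi).1
      omega
    · rw [wit, pack_sum, hwsum]; omega
    · exact mem_pack.mpr (Or.inl ⟨rfl, by omega⟩)
    · intro x hx
      exact ⟨(hwit_mem x hx).1, (hwit_mem x hx).2.1⟩
    · intro hx
      exact (hwit_mem L hx).2.2 rfl
    · rintro ⟨⟨p, hp⟩, hfp⟩
      have henc : enc L p.parts = wit N := congrArg (fun r => r.1.parts) hfp
      exact wit_not_enc L hL N h14 p.parts hp.1 hp.2 p.parts_sum henc

theorem stmt_17 (L : ℕ) (hL : 11 ≤ L) :
    (∀ N : ℕ, 4 ≤ N →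
      Nat.card {p : N.Partition // InCStar2 L p} ≥ Nat.card {p : N.Partition // InD2 L p}) ∧
    (∀ N : ℕ, 14 ≤ N →
      Nat.card {p : N.Partition // InCStar2 L p} > Nat.card {p : N.Partition // InD2 L p}) := by
  constructor
  · intro N hN
    obtain ⟨f, hinj, -⟩ := main_aux L hL N hN
    exact Nat.card_le_card_of_injective f hinj
  · intro N hN
    obtain ⟨f, hinj, hw⟩ := main_aux L hL N (by omega)
    obtain ⟨q, hq⟩ := hw hN
    classical
    rw [Nat.card_eq_fintype_card, Nat.card_eq_fintype_card]
    exact Fintype.card_lt_of_injective_of_notMem f hinj hq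
end

section
/- For every integer N > 43, the number of partitions of N lying in C*_{3,2} is at least the number of partitions of N lying in D_{3,2}. -/
/-- number of 2's in the image triple -/
def fA (a b c : ℕ) : ℕ :=
  if a = 0 then (if b = 0 then 10 else if c = 0 then 10 else if c = 1 then 13 else 7)
  else if a = 1 then (if c = 0 then 1 else 4)
  else if a % 2 = 0 then 3 * a / 2 else (3 * a - 5) / 2

/-- number of 4's in the image triple -/
def fB (a b c : ℕ) : ℕ :=
  if a = 0 then (if b = 0 then 0 else if c = 0 then b - 5 else if c = 1 then b - 9 else b - 1)
  else if a = 1 then (if c = 0 then b - 1 else b)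
  else b

/-- number of 5's in the image triple -/
def fC (a b c : ℕ) : ℕ :=
  if a = 0 then (if b = 0 then c - 4 else if c = 0 then 0 else if c = 1 then 3 else c - 2)
  else if a = 1 then (if c = 0 then 1 else c - 1)
  else if a % 2 = 0 then c else c + 1

lemma f_spec {N a b c : ℕ} (hN : 43 < N) (h : 3 * a + 4 * b + 5 * c = N) :
    2 * fA a b c + 4 * fB a b c + 5 * fC a b c = N ∧ 1 ≤ fA a b c := by
  unfold fA fB fC
  split_ifs <;> omega

set_option maxHeartbeats 3200000 in
lemma f_inj {N a b c d e g : ℕ} (hN : 43 < N)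
    (h1 : 3 * a + 4 * b + 5 * c = N) (h2 : 3 * d + 4 * e + 5 * g = N)
    (e1 : fA a b c = fA d e g) (e2 : fB a b c = fB d e g) (e3 : fC a b c = fC d e g) :
    a = d ∧ b = e ∧ c = g := by
  unfold fA at e1
  unfold fB at e2
  unfold fC at e3
  split_ifs at e1 e2 e3 <;> omega

lemma decomp345 (s : Multiset ℕ) (h : ∀ x ∈ s, 3 ≤ x ∧ x ≤ 5) :
    s = Multiset.replicate (s.count 3) 3 + Multiset.replicate (s.count 4) 4 +
      Multiset.replicate (s.count 5) 5 := by
  ext x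
  simp only [Multiset.count_add, Multiset.count_replicate]
  by_cases h3 : x = 3
  · subst h3; simp
  by_cases h4 : x = 4
  · subst h4; simp
  by_cases h5 : x = 5
  · subst h5; simp
  have hx : x ∉ s := fun hx => by have := h x hx; omega
  rw [Multiset.count_eq_zero.2 hx]
  split_ifs <;> omega

/-- construct a partition of `N` from multiplicities of parts 2, 4, 5 -/
def mkC (N a b c : ℕ) (h : 2 * a + 4 * b + 5 * c = N) : N.Partition where
  parts := Multiset.replicate a 2 + Multiset.replicate b 4 + Multiset.replicate c 5
  parts_pos := by
    intro x hx
    simp only [Multiset.mem_add, Multiset.mem_replicate] at hx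
    omega
  parts_sum := by
    simp [Multiset.sum_replicate]
    omega

lemma mkC_inC (N a b c : ℕ) (h : 2 * a + 4 * b + 5 * c = N) (ha : 1 ≤ a) :
    InCStar2 3 (mkC N a b c h) := by
  refine ⟨?_, ?_, ?_⟩
  · show 2 ∈ Multiset.replicate a 2 + Multiset.replicate b 4 + Multiset.replicate c 5
    exact Multiset.mem_add.2 (Or.inl (Multiset.mem_add.2 (Or.inl
      (Multiset.mem_replicate.2 ⟨by omega, rfl⟩))))
  · intro x hx
    simp only [mkC, Multiset.mem_add, Multiset.mem_replicate] at hx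
    omega
  · show 3 ∉ Multiset.replicate a 2 + Multiset.replicate b 4 + Multiset.replicate c 5
    simp only [Multiset.mem_add, Multiset.mem_replicate]
    omega

lemma mkC_count2 (N a b c : ℕ) (h : 2 * a + 4 * b + 5 * c = N) :
    (mkC N a b c h).parts.count 2 = a := by
  simp [mkC, Multiset.count_replicate]

lemma mkC_count4 (N a b c : ℕ) (h : 2 * a + 4 * b + 5 * c = N) :
    (mkC N a b c h).parts.count 4 = b := by
  simp [mkC, Multiset.count_replicate]

lemma mkC_count5 (N a b c : ℕ) (h : 2 * a + 4 * b + 5 * c = N) :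
    (mkC N a b c h).parts.count 5 = c := by
  simp [mkC, Multiset.count_replicate]

theorem stmt_19 (N : ℕ) (hN : 43 < N) :
    Nat.card {p : N.Partition // InCStar2 3 p} ≥ Nat.card {p : N.Partition // InD2 3 p} := by
  have key : ∀ p : N.Partition, InD2 3 p →
      3 * p.parts.count 3 + 4 * p.parts.count 4 + 5 * p.parts.count 5 = N := by
    intro p hp
    have hd := decomp345 p.parts (fun x hx => hp.2 x hx)
    have hs := p.parts_sum
    rw [hd] at hs
    simp [Multiset.sum_replicate] at hs
    omega
  refine Nat.card_le_card_of_injective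
    (fun q => ⟨mkC N _ _ _ (f_spec hN (key q.1 q.2)).1,
        mkC_inC N _ _ _ _ (f_spec hN (key q.1 q.2)).2⟩) ?_
  rintro ⟨p, hp⟩ ⟨r, hr⟩ hqr
  simp only [Subtype.mk.injEq] at hqr
  have h2 := congrArg (fun pp : N.Partition => pp.parts.count 2) hqr
  have h4 := congrArg (fun pp : N.Partition => pp.parts.count 4) hqr
  have h5 := congrArg (fun pp : N.Partition => pp.parts.count 5) hqr
  simp only [mkC_count2, mkC_count4, mkC_count5] at h2 h4 h5
  obtain ⟨ea, eb, ec⟩ := f_inj hN (key p hp) (key r hr) h2 h4 h5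
  apply Subtype.ext
  apply Nat.Partition.ext
  rw [decomp345 p.parts (fun x hx => (hp.2 x hx)),
    decomp345 r.parts (fun x hx => (hr.2 x hx)), ea, eb, ec]
end
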